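/- arXiv:2307.15102 — 3 statements merged into one kernel-verified Lean document; each statement's English description precedes it below -/
import Mathlib

section
/- Let −∞ ≤ a < b ≤ ∞ and let I be one of the intervals (a,b), (a,b], [a,b), [a,b]. Let α, β : I → ℝ be continuous and let A(t) be the 2×2 real matrix with rows (α(t), β(t)) and (−β(t), α(t)). Suppose that κ₃₂(t) := ∫_a^t e^{∫_s^t α(τ) dτ} ds exists (as a finite, possibly improper, integral) for all t ∈ I, and that K₃₂ := sup_{t∈I} κ₃₂(t) < ∞. Then the system x' = A(t)x is Ulam stable on I with Ulam constant K₃₂ (with respect to the Euclidean norm on ℝ²). Furthermore, if in addition lim_{t→a⁺} ∫_t^{t₀} α(s) ds = −∞ for t₀ ∈ (a,b), then for every ε > 0 and every continuously differentiable φ : I → ℝ² with sup_{t∈I} ‖φ'(t) − A(t)φ(t)‖₂ ≤ ε, there exists a unique solution x of x' = A(t)x satisfying sup_{t∈I} ‖φ(t) − x(t)‖₂ ≤ K₃₂ε. -/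
open MeasureTheory Filter Set

noncomputable section

/-- The Euclidean norm `√(v₁² + v₂²)` on `ℝ²`. -/
def enorm2 (v : Fin 2 → ℝ) : ℝ := Real.sqrt ((v 0) ^ 2 + (v 1) ^ 2)

/-- Ulam stability on `I` with constant `K` for the system `x' = A(t) x` on `ℝ²`,
with respect to the Euclidean norm. -/
def UlamStable2R (I : Set ℝ) (A : ℝ → Matrix (Fin 2) (Fin 2) ℝ) (K : ℝ) : Prop :=
  0 < K ∧
  ∀ ε : ℝ, 0 < ε →
    ∀ φ φd : ℝ → Fin 2 → ℝ,
      (∀ t ∈ I, HasDerivWithinAt φ (φd t) I t) →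
      ContinuousOn φd I →
      (∀ t ∈ I, enorm2 (φd t - (A t).mulVec (φ t)) ≤ ε) →
      ∃ x : ℝ → Fin 2 → ℝ,
        (∀ t ∈ I, HasDerivWithinAt x ((A t).mulVec (x t)) I t) ∧
        ∀ t ∈ I, enorm2 (φ t - x t) ≤ K * ε

/-- `κ₃₂(t) = ∫_a^t exp(∫_s^t α) ds`. -/
def kappa32 (a : EReal) (al : ℝ → ℝ) (t : ℝ) : ℝ :=
  ∫ s in {s : ℝ | a < (s : EReal) ∧ s < t}, Real.exp (∫ τ in s..t, al τ)

namespace Stmt16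

def toCL : (Fin 2 → ℝ) →L[ℝ] ℂ :=
  Complex.ofRealCLM.comp (ContinuousLinearMap.proj 0) +
    Complex.I • Complex.ofRealCLM.comp (ContinuousLinearMap.proj (R := ℝ) (φ := fun _ : Fin 2 => ℝ) 1)

lemma toCL_apply (v : Fin 2 → ℝ) : toCL v = (v 0 : ℂ) + (v 1 : ℂ) * Complex.I := by
  simp [toCL, smul_eq_mul]
  ring

lemma toCL_re (v : Fin 2 → ℝ) : (toCL v).re = v 0 := by
  rw [toCL_apply]; simp

lemma toCL_im (v : Fin 2 → ℝ) : (toCL v).im = v 1 := by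
  rw [toCL_apply]; simp

lemma toCL_mk (z : ℂ) : toCL ![z.re, z.im] = z := by
  apply Complex.ext
  · rw [toCL_re]; simp
  · rw [toCL_im]; simp

lemma toCL_inj {v w : Fin 2 → ℝ} (h : toCL v = toCL w) : v = w := by
  funext i
  fin_cases i
  · have := congrArg Complex.re h; simpa [toCL_re] using this
  · have := congrArg Complex.im h; simpa [toCL_im] using this

lemma enorm2_eq (v : Fin 2 → ℝ) : enorm2 v = ‖toCL v‖ := by
  rw [Complex.norm_def, Complex.normSq_apply, toCL_re, toCL_im, enorm2]
  ring_nf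

lemma toCL_mulVec (c d : ℝ) (v : Fin 2 → ℝ) :
    toCL ((!![c, d; -d, c]).mulVec v) = ((c : ℂ) - d * Complex.I) * toCL v := by
  apply Complex.ext
  · rw [toCL_re]
    simp [Matrix.mulVec, dotProduct, Fin.sum_univ_two, Complex.mul_re, toCL_re, toCL_im]
    try ring
  · rw [toCL_im]
    simp [Matrix.mulVec, dotProduct, Fin.sum_univ_two, Complex.mul_im, toCL_re, toCL_im]
    try ring

lemma enorm2_sub_comm (u v : Fin 2 → ℝ) : enorm2 (u - v) = enorm2 (v - u) := by
  rw [enorm2_eq, enorm2_eq, map_sub toCL u v, map_sub toCL v u,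
    norm_sub_rev]

lemma enorm2_triangle (u v w : Fin 2 → ℝ) :
    enorm2 (u - w) ≤ enorm2 (u - v) + enorm2 (v - w) := by
  rw [enorm2_eq, enorm2_eq, enorm2_eq, map_sub toCL u w, map_sub toCL u v, map_sub toCL v w]
  exact norm_sub_le_norm_sub_add_norm_sub (toCL u) (toCL v) (toCL w)

lemma ftc {E : Type*} [NormedAddCommGroup E] [NormedSpace ℝ E] [CompleteSpace E]
    {h : ℝ → E} {I : Set ℝ} (hI : OrdConnected I) (hc : ContinuousOn h I)
    {t₀ t : ℝ} (ht₀ : t₀ ∈ I) (ht : t ∈ I) :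
    HasDerivWithinAt (fun u => ∫ x in t₀..u, h x) (h t) I t := by
  have hii : ∀ {s u : ℝ}, s ∈ I → u ∈ I → IntervalIntegrable h volume s u := fun hs hu =>
    (hc.mono (hI.uIcc_subset hs hu)).intervalIntegrable
  have key : HasDerivWithinAt (fun u => ∫ x in t..u, h x) (h t) I t := by
    rw [hasDerivWithinAt_iff_tendsto_slope]
    rw [Metric.tendsto_nhdsWithin_nhds]
    intro ε hε
    obtain ⟨δ, hδ, hδ'⟩ := Metric.continuousWithinAt_iff.1 (hc t ht) (ε / 2) (by linarith)
    refine ⟨δ, hδ, fun {u} hu hud => ?_⟩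
    have huI : u ∈ I := hu.1
    have hune : u ≠ t := hu.2
    have habs : |u - t| ≠ 0 := abs_ne_zero.2 (sub_ne_zero.2 hune)
    have hsubset : uIcc t u ⊆ I := hI.uIcc_subset ht huI
    have hint : IntervalIntegrable h volume t u := hii ht huI
    have hbound : ∀ x ∈ Set.uIoc t u, ‖h x - h t‖ ≤ ε / 2 := by
      intro x hx
      have hx' : x ∈ uIcc t u := uIoc_subset_uIcc hx
      have hxI : x ∈ I := hsubset hx'
      have hxd : dist x t < δ := by
        rw [Real.dist_eq] at hud ⊢
        have h1 : |x - t| ≤ |u - t| := by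
          rcases le_total t u with hc1 | hc1
          · rw [uIcc_of_le hc1] at hx'
            rw [abs_of_nonneg (by linarith [hx'.1]), abs_of_nonneg (by linarith)]
            linarith [hx'.2]
          · rw [uIcc_of_ge hc1] at hx'
            rw [abs_of_nonpos (by linarith [hx'.2]), abs_of_nonpos (by linarith)]
            linarith [hx'.1]
        exact lt_of_le_of_lt h1 hud
      exact le_of_lt (by simpa [dist_eq_norm] using hδ' hxI hxd)
    have heq : (∫ x in t..u, h x) - (u - t) • h t = ∫ x in t..u, (h x - h t) := by
      rw [intervalIntegral.integral_sub hint intervalIntegrable_const,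
        intervalIntegral.integral_const]
    have hle : ‖(∫ x in t..u, h x) - (u - t) • h t‖ ≤ ε / 2 * |u - t| := by
      rw [heq]
      exact intervalIntegral.norm_integral_le_of_norm_le_const hbound
    have hslope : slope (fun u => ∫ x in t..u, h x) t u - h t
        = (u - t)⁻¹ • ((∫ x in t..u, h x) - (u - t) • h t) := by
      rw [slope_def_module, intervalIntegral.integral_same, sub_zero, smul_sub, smul_smul,
        inv_mul_cancel₀ (sub_ne_zero.2 hune), one_smul]
    rw [dist_eq_norm, hslope, norm_smul, norm_inv, Real.norm_eq_abs]
    calc |u - t|⁻¹ * ‖(∫ x in t..u, h x) - (u - t) • h t‖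
        ≤ |u - t|⁻¹ * (ε / 2 * |u - t|) := mul_le_mul_of_nonneg_left hle (by positivity)
      _ = ε / 2 := by rw [mul_comm (ε / 2), ← mul_assoc, inv_mul_cancel₀ habs, one_mul]
      _ < ε := by linarith
  have heq : ∀ u ∈ I, (fun u => ∫ x in t₀..u, h x) u
      = (∫ x in t₀..t, h x) + ∫ x in t..u, h x := by
    intro u hu
    rw [intervalIntegral.integral_add_adjacent_intervals (hii ht₀ ht) (hii ht hu)]
  exact (key.const_add (∫ x in t₀..t, h x)).congr (fun u hu => heq u hu) (heq t ht)

lemma ordConn (a b : EReal) (I : Set ℝ)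
    (hI1 : ∀ x : ℝ, a < (x : EReal) → (x : EReal) < b → x ∈ I)
    (hI2 : ∀ x ∈ I, a ≤ (x : EReal) ∧ (x : EReal) ≤ b) : OrdConnected I := by
  constructor
  intro x hx y hy z hz
  rcases hz with ⟨hxz, hzy⟩
  by_cases h1 : a < (z : EReal)
  · by_cases h2 : (z : EReal) < b
    · exact hI1 z h1 h2
    · have hzb : (z : EReal) = b :=
        le_antisymm (le_trans (EReal.coe_le_coe_iff.2 hzy) (hI2 y hy).2) (not_lt.1 h2)
      have hyz : (y : EReal) = (z : EReal) :=
        le_antisymm (hzb ▸ (hI2 y hy).2) (EReal.coe_le_coe_iff.2 hzy)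
      have : y = z := by exact_mod_cast hyz
      rwa [← this]
  · have hza : (z : EReal) = a :=
      le_antisymm (not_lt.1 h1) (le_trans (hI2 x hx).1 (EReal.coe_le_coe_iff.2 hxz))
    have hxz' : (x : EReal) = (z : EReal) :=
      le_antisymm (EReal.coe_le_coe_iff.2 hxz) (hza ▸ (hI2 x hx).1)
    have : x = z := by exact_mod_cast hxz'
    rwa [← this]

lemma const_of_deriv_zero {f : ℝ → ℂ} {I : Set ℝ} (hI : OrdConnected I)
    (hf : ∀ t ∈ I, HasDerivWithinAt f 0 I t) {s t : ℝ} (hs : s ∈ I) (ht : t ∈ I) :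
    f s = f t := by
  have key : ∀ {s t : ℝ}, s ∈ I → t ∈ I → s ≤ t → f t = f s := by
    intro s t hs ht hst
    have hsub : Icc s t ⊆ I := hI.out hs ht
    have hcont : ContinuousOn f (Icc s t) := fun u hu =>
      ((hf u (hsub hu)).continuousWithinAt).mono hsub
    have hderiv : ∀ u ∈ Ico s t, HasDerivWithinAt f 0 (Ici u) u := by
      intro u hu
      have huI : u ∈ I := hsub (Ico_subset_Icc_self hu)
      have h1 : HasDerivWithinAt f 0 (Icc u t) u := (hf u huI).mono (hI.out huI ht)
      exact h1.mono_of_mem_nhdsWithin (Icc_mem_nhdsGE_of_mem ⟨le_refl u, hu.2⟩)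
    exact constant_of_has_deriv_right_zero hcont hderiv t (right_mem_Icc.2 hst)
  rcases le_total s t with h | h
  · exact (key hs ht h).symm
  · exact key ht hs h

lemma ofC_deriv {xc : ℝ → ℂ} {I : Set ℝ} {t : ℝ} {c d : ℝ}
    (h : HasDerivWithinAt xc (((c : ℂ) - (d : ℂ) * Complex.I) * xc t) I t) :
    HasDerivWithinAt (fun u => ![(xc u).re, (xc u).im])
      ((!![c, d; -d, c]).mulVec ![(xc t).re, (xc t).im]) I t := by
  apply hasDerivWithinAt_pi.2
  intro i
  fin_cases i
  · have h1 := Complex.reCLM.hasFDerivAt.comp_hasDerivWithinAt t h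
    simp only [Function.comp_def, Complex.reCLM_apply] at h1
    convert h1 using 2 with u
    all_goals simp [Matrix.mulVec, dotProduct, Fin.sum_univ_two, Complex.mul_re]
    all_goals ring
  · have h1 := Complex.imCLM.hasFDerivAt.comp_hasDerivWithinAt t h
    simp only [Function.comp_def, Complex.imCLM_apply] at h1
    convert h1 using 2 with u
    all_goals simp [Matrix.mulVec, dotProduct, Fin.sum_univ_two, Complex.mul_im]
    all_goals ring

lemma solution_exists (a b : EReal) (hab : a < b) (I : Set ℝ)
    (hI1 : ∀ x : ℝ, a < (x : EReal) → (x : EReal) < b → x ∈ I)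
    (hI2 : ∀ x ∈ I, a ≤ (x : EReal) ∧ (x : EReal) ≤ b)
    (al be : ℝ → ℝ) (hal : ContinuousOn al I) (hbe : ContinuousOn be I)
    (hker : ∀ t ∈ I, IntegrableOn
      (fun s => Real.exp (∫ τ in s..t, al τ)) {s : ℝ | a < (s : EReal) ∧ s < t})
    (hbdd : BddAbove (kappa32 a al '' I))
    (ε : ℝ) (hε : 0 < ε) (φ φd : ℝ → Fin 2 → ℝ)
    (hφ : ∀ t ∈ I, HasDerivWithinAt φ (φd t) I t) (hφd : ContinuousOn φd I)
    (hq : ∀ t ∈ I, enorm2 (φd t - (!![al t, be t; -(be t), al t]).mulVec (φ t)) ≤ ε) :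
    ∃ x : ℝ → Fin 2 → ℝ,
      (∀ t ∈ I, HasDerivWithinAt x ((!![al t, be t; -(be t), al t]).mulVec (x t)) I t) ∧
      ∀ t ∈ I, enorm2 (φ t - x t) ≤ sSup (kappa32 a al '' I) * ε := by
  classical
  obtain ⟨t₀, hat₀, ht₀b⟩ := EReal.exists_between_coe_real hab
  have ht₀ : t₀ ∈ I := hI1 t₀ hat₀ ht₀b
  have hIoc : OrdConnected I := ordConn a b I hI1 hI2
  set K := sSup (kappa32 a al '' I) with hK
  set lam : ℝ → ℂ := fun t => (al t : ℂ) - (be t : ℂ) * Complex.I with hlamdef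
  set F : ℝ → ℝ := fun t => ∫ τ in t₀..t, al τ with hFdef
  set B : ℝ → ℝ := fun t => ∫ τ in t₀..t, be τ with hBdef
  set G : ℝ → ℂ := fun t => (F t : ℂ) - (B t : ℂ) * Complex.I with hGdef
  have hF : ∀ t ∈ I, HasDerivWithinAt F (al t) I t := fun t ht => ftc hIoc hal ht₀ ht
  have hB : ∀ t ∈ I, HasDerivWithinAt B (be t) I t := fun t ht => ftc hIoc hbe ht₀ ht
  have hG : ∀ t ∈ I, HasDerivWithinAt G (lam t) I t := by
    intro t ht
    have h1 : HasDerivWithinAt (fun u => ((F u : ℝ) : ℂ)) ((al t : ℂ)) I t := by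
      have := Complex.ofRealCLM.hasFDerivAt.comp_hasDerivWithinAt t (hF t ht)
      simpa [Function.comp_def] using this
    have h2 : HasDerivWithinAt (fun u => ((B u : ℝ) : ℂ)) ((be t : ℂ)) I t := by
      have := Complex.ofRealCLM.hasFDerivAt.comp_hasDerivWithinAt t (hB t ht)
      simpa [Function.comp_def] using this
    exact h1.sub (h2.mul_const Complex.I)
  have hGre : ∀ t, (G t).re = F t := by intro t; simp [hGdef]
  have hFadd : ∀ s ∈ I, ∀ t ∈ I, (∫ x in s..t, al x) = F t - F s := by
    intro s hs t ht
    have h1 : IntervalIntegrable al volume t₀ s :=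
      (hal.mono (hIoc.uIcc_subset ht₀ hs)).intervalIntegrable
    have h2 : IntervalIntegrable al volume s t :=
      (hal.mono (hIoc.uIcc_subset hs ht)).intervalIntegrable
    have := intervalIntegral.integral_add_adjacent_intervals h1 h2
    simp only [hFdef]
    linarith
  have hFc : ContinuousOn F I := fun t ht => (hF t ht).continuousWithinAt
  have hGc : ContinuousOn G I := fun t ht => (hG t ht).continuousWithinAt
  set E : ℝ → Set ℝ := fun t => {s : ℝ | a < (s : EReal) ∧ s < t} with hEdef
  have hEm : ∀ t, MeasurableSet (E t) := by
    intro t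
    have : E t = ((fun s : ℝ => (s : EReal)) ⁻¹' (Ioi a)) ∩ Iio t := by
      ext s; simp [hEdef, and_comm]
    rw [this]
    exact ((measurableSet_Ioi).preimage continuous_coe_real_ereal.measurable).inter
      measurableSet_Iio
  have hEsub : ∀ t ∈ I, E t ⊆ I := fun t ht s hs =>
    hI1 s hs.1 (lt_of_lt_of_le (EReal.coe_lt_coe_iff.2 hs.2) (hI2 t ht).2)
  have hEmono : ∀ {t₁ t₂ : ℝ}, t₁ ≤ t₂ → E t₁ ⊆ E t₂ := fun h s hs =>
    ⟨hs.1, lt_of_lt_of_le hs.2 h⟩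
  set φc : ℝ → ℂ := fun t => toCL (φ t) with hφcdef
  set qc : ℝ → ℂ := fun t => toCL (φd t) - lam t * toCL (φ t) with hqcdef
  have hφc : ∀ t ∈ I, HasDerivWithinAt φc (toCL (φd t)) I t := fun t ht =>
    toCL.hasFDerivAt.comp_hasDerivWithinAt t (hφ t ht)
  have hqabs : ∀ t ∈ I, ‖qc t‖ ≤ ε := by
    intro t ht
    have h1 := hq t ht
    rw [enorm2_eq] at h1
    have h2 : toCL (φd t - (!![al t, be t; -(be t), al t]).mulVec (φ t)) = qc t := by
      rw [map_sub, toCL_mulVec]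
    rwa [h2] at h1
  have hφcont : ContinuousOn φc I :=
    toCL.continuous.comp_continuousOn (fun t ht => (hφ t ht).continuousWithinAt)
  have hφdcont : ContinuousOn (fun t => toCL (φd t)) I := toCL.continuous.comp_continuousOn hφd
  have hlamcont : ContinuousOn lam I :=
    (Complex.continuous_ofReal.comp_continuousOn hal).sub
      ((Complex.continuous_ofReal.comp_continuousOn hbe).mul continuousOn_const)
  have hqcont : ContinuousOn qc I := hφdcont.sub (hlamcont.mul hφcont)
  set h : ℝ → ℂ := fun s => Complex.exp (-(G s)) * qc s with hhdef
  have hhcont : ContinuousOn h I :=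
    (Complex.continuous_exp.comp_continuousOn hGc.neg).mul hqcont
  have hhnorm : ∀ s ∈ I, ‖h s‖ ≤ Real.exp (-(F s)) * ε := by
    intro s hs
    have h1 : ‖h s‖ = Real.exp (-(F s)) * ‖qc s‖ := by
      rw [hhdef]
      simp only [norm_mul, Complex.norm_exp]
      congr 1
      simp [hGre]
    rw [h1]
    exact mul_le_mul_of_nonneg_left (hqabs s hs) (Real.exp_nonneg _)
  have hker' : ∀ t ∈ I, IntegrableOn (fun s => Real.exp (F t) * Real.exp (-(F s))) (E t) := by
    intro t ht
    refine (hker t ht).congr_fun (fun s hs => ?_) (hEm t)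
    beta_reduce
    rw [hFadd s (hEsub t ht hs) t ht, ← Real.exp_add]
    ring_nf
  have hexp_int : ∀ t ∈ I, IntegrableOn (fun s => Real.exp (-(F s))) (E t) := by
    intro t ht
    have h1 := (hker' t ht).const_mul (Real.exp (-(F t)))
    have heqf : (fun s => Real.exp (-(F t)) * (Real.exp (F t) * Real.exp (-(F s))))
        = fun s => Real.exp (-(F s)) := by
      funext s
      rw [← mul_assoc, ← Real.exp_add, neg_add_cancel, Real.exp_zero, one_mul]
    rwa [heqf] at h1
  have hint : ∀ t ∈ I, IntegrableOn h (E t) := by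
    intro t ht
    refine Integrable.mono ((hexp_int t ht).mul_const ε)
      ((hhcont.mono (hEsub t ht)).aestronglyMeasurable (hEm t)) ?_
    refine (ae_restrict_iff' (hEm t)).2 (ae_of_all _ fun s hs => ?_)
    have h1 := hhnorm s (hEsub t ht hs)
    have hnn : (0 : ℝ) ≤ Real.exp (-(F s)) * ε := by positivity
    rw [Real.norm_eq_abs, abs_of_nonneg hnn]
    exact h1
  set W : ℝ → ℂ := fun t => ∫ s in E t, h s with hWdef
  have hWadd : ∀ t₁, t₁ ∈ I → ∀ t₂, t₂ ∈ I → t₁ ≤ t₂ →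
      W t₂ = W t₁ + ∫ s in t₁..t₂, h s := by
    intro t₁ h₁ t₂ h₂ h12
    have hsub : E t₁ ⊆ E t₂ := hEmono h12
    have hD : MeasurableSet (E t₂ \ E t₁) := (hEm t₂).diff (hEm t₁)
    have hdisj : Disjoint (E t₁) (E t₂ \ E t₁) := disjoint_sdiff_self_right
    have hunion : E t₁ ∪ (E t₂ \ E t₁) = E t₂ := union_diff_cancel hsub
    have hi1 : IntegrableOn h (E t₁) := hint t₁ h₁
    have hiD : IntegrableOn h (E t₂ \ E t₁) := (hint t₂ h₂).mono_set diff_subset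
    have h1 : (∫ s in E t₂, h s) = (∫ s in E t₁, h s) + ∫ s in E t₂ \ E t₁, h s := by
      have := setIntegral_union hdisj hD hi1 hiD
      rwa [hunion] at this
    have hae : (E t₂ \ E t₁ : Set ℝ) =ᵐ[volume] Ioc t₁ t₂ := by
      rw [MeasureTheory.ae_eq_set]
      constructor
      · refine measure_mono_null (fun s hs => ?_) (Real.volume_singleton (a := t₁))
        obtain ⟨⟨⟨has, hst2⟩, hnot⟩, hnotIoc⟩ := hs
        have ht1s : t₁ ≤ s := by
          by_contra hc
          exact hnot ⟨has, not_le.1 hc⟩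
        have hn : ¬ t₁ < s := fun hlt => hnotIoc ⟨hlt, le_of_lt hst2⟩
        have : s = t₁ := le_antisymm (not_lt.1 hn) ht1s
        simp [this]
      · refine measure_mono_null (fun s hs => ?_) (Real.volume_singleton (a := t₂))
        obtain ⟨⟨ht1s, hst2⟩, hnotD⟩ := hs
        have has : a < (s : EReal) :=
          lt_of_le_of_lt (hI2 t₁ h₁).1 (EReal.coe_lt_coe_iff.2 ht1s)
        have hn : ¬ s < t₂ := by
          intro hlt
          exact hnotD ⟨⟨has, hlt⟩, fun hmem => absurd hmem.2 (not_lt.2 (le_of_lt ht1s))⟩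
        have : s = t₂ := le_antisymm hst2 (not_lt.1 hn)
        simp [this]
    have h2 : (∫ s in E t₂ \ E t₁, h s) = ∫ s in Ioc t₁ t₂, h s := setIntegral_congr_set hae
    rw [intervalIntegral.integral_of_le h12]
    show (∫ s in E t₂, h s) = (∫ s in E t₁, h s) + ∫ s in Ioc t₁ t₂, h s
    rw [h1, h2]
  have hW : ∀ t ∈ I, HasDerivWithinAt W (h t) I t := by
    intro t ht
    have heq : ∀ u ∈ I, W u = W t₀ + ∫ s in t₀..u, h s := by
      intro u hu
      rcases le_total t₀ u with hc | hc
      · exact hWadd t₀ ht₀ u hu hc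
      · have h1 := hWadd u hu t₀ ht₀ hc
        rw [intervalIntegral.integral_symm]
        rw [h1]
        ring
    exact ((ftc hIoc hhcont ht₀ ht).const_add (W t₀)).congr (fun u hu => heq u hu) (heq t ht)
  set xc : ℝ → ℂ := fun t => φc t - Complex.exp (G t) * W t with hxcdef
  have hxc : ∀ t ∈ I, HasDerivWithinAt xc (lam t * xc t) I t := by
    intro t ht
    have h1 : HasDerivWithinAt (fun u => Complex.exp (G u) * W u)
        (Complex.exp (G t) * lam t * W t + Complex.exp (G t) * h t) I t :=
      ((hG t ht).cexp).mul (hW t ht)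
    have h2 := (hφc t ht).sub h1
    refine h2.congr_deriv ?_
    have hqq : toCL (φd t) = lam t * toCL (φ t) + qc t := by
      rw [hqcdef]
      ring
    have hexp : Complex.exp (G t) * h t = qc t := by
      rw [hhdef]
      show Complex.exp (G t) * (Complex.exp (-(G t)) * qc t) = qc t
      rw [← mul_assoc, ← Complex.exp_add, add_neg_cancel, Complex.exp_zero, one_mul]
    rw [hqq, hexp, hxcdef, hφcdef]
    ring
  have hbound : ∀ t ∈ I, ‖φc t - xc t‖ ≤ K * ε := by
    intro t ht
    have h0 : φc t - xc t = Complex.exp (G t) * W t := by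
      rw [hxcdef, sub_sub_cancel]
    rw [h0, norm_mul, Complex.norm_exp, hGre]
    have h1 : ‖W t‖ ≤ ∫ s in E t, ‖h s‖ := by
      exact norm_integral_le_integral_norm h
    have h2 : (∫ s in E t, ‖h s‖) ≤ ∫ s in E t, Real.exp (-(F s)) * ε :=
      setIntegral_mono_on (hint t ht).norm ((hexp_int t ht).mul_const ε) (hEm t)
        (fun s hs => hhnorm s (hEsub t ht hs))
    have h3 : Real.exp (F t) * ∫ s in E t, Real.exp (-(F s)) * ε = kappa32 a al t * ε := by
      rw [kappa32, ← integral_const_mul, ← integral_mul_const]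
      refine setIntegral_congr_fun (hEm t) (fun s hs => ?_)
      rw [hFadd s (hEsub t ht hs) t ht, ← mul_assoc, ← Real.exp_add]
      ring_nf
    calc Real.exp (F t) * ‖W t‖
        ≤ Real.exp (F t) * ∫ s in E t, Real.exp (-(F s)) * ε :=
          mul_le_mul_of_nonneg_left (h1.trans h2) (Real.exp_nonneg _)
      _ = kappa32 a al t * ε := h3
      _ ≤ K * ε := mul_le_mul_of_nonneg_right (le_csSup hbdd ⟨t, ht, rfl⟩) (le_of_lt hε)
  refine ⟨fun t => ![(xc t).re, (xc t).im], fun t ht => ofC_deriv (hxc t ht), fun t ht => ?_⟩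
  rw [enorm2_eq, map_sub, toCL_mk]
  exact hbound t ht

lemma K_pos (a b : EReal) (hab : a < b) (I : Set ℝ)
    (hI1 : ∀ x : ℝ, a < (x : EReal) → (x : EReal) < b → x ∈ I)
    (hI2 : ∀ x ∈ I, a ≤ (x : EReal) ∧ (x : EReal) ≤ b)
    (al : ℝ → ℝ) (hal : ContinuousOn al I)
    (hker : ∀ t ∈ I, IntegrableOn
      (fun s => Real.exp (∫ τ in s..t, al τ)) {s : ℝ | a < (s : EReal) ∧ s < t})
    (hbdd : BddAbove (kappa32 a al '' I)) :
    0 < sSup (kappa32 a al '' I) := by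
  obtain ⟨t₁, hat₁, ht₁b⟩ := EReal.exists_between_coe_real hab
  have ht₁ : t₁ ∈ I := hI1 t₁ hat₁ ht₁b
  obtain ⟨t₂, hat₂, ht₂t₁⟩ := EReal.exists_between_coe_real hat₁
  have ht₂t₁' : t₂ < t₁ := EReal.coe_lt_coe_iff.1 ht₂t₁
  have ht₂ : t₂ ∈ I := hI1 t₂ hat₂ (lt_trans ht₂t₁ ht₁b)
  have hIoc : OrdConnected I := ordConn a b I hI1 hI2
  set F : ℝ → ℝ := fun t => ∫ τ in t₁..t, al τ with hFdef
  have hF : ∀ t ∈ I, HasDerivWithinAt F (al t) I t := fun t ht => ftc hIoc hal ht₁ ht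
  have hFc : ContinuousOn F I := fun t ht => (hF t ht).continuousWithinAt
  have hFadd : ∀ s ∈ I, ∀ t ∈ I, (∫ x in s..t, al x) = F t - F s := by
    intro s hs t ht
    have h1 : IntervalIntegrable al volume t₁ s :=
      (hal.mono (hIoc.uIcc_subset ht₁ hs)).intervalIntegrable
    have h2 : IntervalIntegrable al volume s t :=
      (hal.mono (hIoc.uIcc_subset hs ht)).intervalIntegrable
    have := intervalIntegral.integral_add_adjacent_intervals h1 h2
    simp only [hFdef]
    linarith
  have hpos : 0 < kappa32 a al t₁ := by
    rw [kappa32]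
    have hsub : Ioo t₂ t₁ ⊆ {s : ℝ | a < (s : EReal) ∧ s < t₁} := fun s hs =>
      ⟨lt_trans hat₂ (EReal.coe_lt_coe_iff.2 hs.1), hs.2⟩
    have husub : uIcc t₂ t₁ ⊆ I := hIoc.uIcc_subset ht₂ ht₁
    have hposIoo : 0 < ∫ s in Ioo t₂ t₁, Real.exp (∫ τ in s..t₁, al τ) := by
      rw [setIntegral_congr_set Ioo_ae_eq_Ioc,
        ← intervalIntegral.integral_of_le (le_of_lt ht₂t₁')]
      apply intervalIntegral.intervalIntegral_pos_of_pos_on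
      · apply ContinuousOn.intervalIntegrable
        have hcc : ContinuousOn (fun s => Real.exp (F t₁ - F s)) (uIcc t₂ t₁) :=
          Real.continuous_exp.comp_continuousOn
            (continuousOn_const.sub (hFc.mono husub))
        exact hcc.congr (fun s hs => by rw [hFadd s (husub hs) t₁ ht₁])
      · exact fun s _ => Real.exp_pos _
      · exact ht₂t₁'
    have hmono : (∫ s in Ioo t₂ t₁, Real.exp (∫ τ in s..t₁, al τ))
        ≤ ∫ s in {s : ℝ | a < (s : EReal) ∧ s < t₁}, Real.exp (∫ τ in s..t₁, al τ) :=
      setIntegral_mono_set (hker t₁ ht₁)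
        (Filter.Eventually.of_forall (fun s => Real.exp_nonneg _))
        (HasSubset.Subset.eventuallyLE hsub)
    exact lt_of_lt_of_le hposIoo hmono
  exact lt_of_lt_of_le hpos (le_csSup hbdd ⟨t₁, ht₁, rfl⟩)

lemma rigidity (a b : EReal) (hab : a < b) (I : Set ℝ)
    (hI1 : ∀ x : ℝ, a < (x : EReal) → (x : EReal) < b → x ∈ I)
    (hI2 : ∀ x ∈ I, a ≤ (x : EReal) ∧ (x : EReal) ≤ b)
    (al be : ℝ → ℝ) (hal : ContinuousOn al I) (hbe : ContinuousOn be I)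
    (hlim : ∀ t₀ : ℝ, a < (t₀ : EReal) → (t₀ : EReal) < b →
        Tendsto (fun t => ∫ s in t..t₀, al s)
          (Filter.comap (fun x : ℝ => (x : EReal)) (nhdsWithin a (Ioi a))) atBot)
    (x y : ℝ → Fin 2 → ℝ)
    (hx : ∀ t ∈ I, HasDerivWithinAt x ((!![al t, be t; -(be t), al t]).mulVec (x t)) I t)
    (hy : ∀ t ∈ I, HasDerivWithinAt y ((!![al t, be t; -(be t), al t]).mulVec (y t)) I t)
    (M : ℝ) (hM : ∀ t ∈ I, enorm2 (x t - y t) ≤ M) : EqOn y x I := by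
  obtain ⟨t₀, hat₀, ht₀b⟩ := EReal.exists_between_coe_real hab
  have ht₀ : t₀ ∈ I := hI1 t₀ hat₀ ht₀b
  have hIoc : OrdConnected I := ordConn a b I hI1 hI2
  set lam : ℝ → ℂ := fun t => (al t : ℂ) - (be t : ℂ) * Complex.I with hlamdef
  set F : ℝ → ℝ := fun t => ∫ τ in t₀..t, al τ with hFdef
  set B : ℝ → ℝ := fun t => ∫ τ in t₀..t, be τ with hBdef
  set G : ℝ → ℂ := fun t => (F t : ℂ) - (B t : ℂ) * Complex.I with hGdef
  have hF : ∀ t ∈ I, HasDerivWithinAt F (al t) I t := fun t ht => ftc hIoc hal ht₀ ht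
  have hB : ∀ t ∈ I, HasDerivWithinAt B (be t) I t := fun t ht => ftc hIoc hbe ht₀ ht
  have hG : ∀ t ∈ I, HasDerivWithinAt G (lam t) I t := by
    intro t ht
    have h1 : HasDerivWithinAt (fun u => ((F u : ℝ) : ℂ)) ((al t : ℂ)) I t := by
      have := Complex.ofRealCLM.hasFDerivAt.comp_hasDerivWithinAt t (hF t ht)
      simpa [Function.comp_def] using this
    have h2 : HasDerivWithinAt (fun u => ((B u : ℝ) : ℂ)) ((be t : ℂ)) I t := by
      have := Complex.ofRealCLM.hasFDerivAt.comp_hasDerivWithinAt t (hB t ht)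
      simpa [Function.comp_def] using this
    exact h1.sub (h2.mul_const Complex.I)
  have hGre : ∀ t, (G t).re = F t := by intro t; simp [hGdef]
  set w : ℝ → ℂ := fun t => toCL (x t) - toCL (y t) with hwdef
  have hw : ∀ t ∈ I, HasDerivWithinAt w (lam t * w t) I t := by
    intro t ht
    have h1 := toCL.hasFDerivAt.comp_hasDerivWithinAt t (hx t ht)
    have h2 := toCL.hasFDerivAt.comp_hasDerivWithinAt t (hy t ht)
    simp only [Function.comp_def, toCL_mulVec] at h1 h2
    have h3 := h1.sub h2
    refine h3.congr_deriv ?_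
    rw [hwdef, hlamdef]
    ring
  set g : ℝ → ℂ := fun t => Complex.exp (-(G t)) * w t with hgdef
  have hg : ∀ t ∈ I, HasDerivWithinAt g 0 I t := by
    intro t ht
    have h1 := (((hG t ht).neg).cexp).mul (hw t ht)
    refine h1.congr_deriv ?_
    ring
  have hconst : ∀ t ∈ I, g t = g t₀ := fun t ht => const_of_deriv_zero hIoc hg ht ht₀
  by_cases hc : g t₀ = 0
  · intro t ht
    have h0 : Complex.exp (-(G t)) * w t = 0 := (hconst t ht).trans hc
    have hw0 : w t = 0 := by
      rcases mul_eq_zero.1 h0 with h | h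
      · exact absurd h (Complex.exp_ne_zero _)
      · exact h
    exact (toCL_inj (sub_eq_zero.1 hw0)).symm
  · exfalso
    have hwnorm : ∀ t ∈ I, Real.exp (F t) * ‖g t₀‖ ≤ M := by
      intro t ht
      have h1 : w t = Complex.exp (G t) * g t₀ := by
        calc w t = Complex.exp (G t) * (Complex.exp (-(G t)) * w t) := by
              rw [← mul_assoc, ← Complex.exp_add, add_neg_cancel, Complex.exp_zero, one_mul]
          _ = Complex.exp (G t) * g t₀ := congrArg (fun z => Complex.exp (G t) * z) (hconst t ht)
      have h2 : ‖w t‖ = Real.exp (F t) * ‖g t₀‖ := by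
        rw [h1, norm_mul, Complex.norm_exp, hGre]
      rw [← h2]
      have h3 := hM t ht
      rwa [enorm2_eq, map_sub] at h3
    have hcpos : 0 < ‖g t₀‖ := norm_pos_iff.mpr hc
    set L := Filter.comap (fun x : ℝ => (x : EReal)) (nhdsWithin a (Ioi a)) with hLdef
    have hLne : L.NeBot := by
      rw [hLdef, Filter.comap_neBot_iff]
      intro s hs
      rw [mem_nhdsGT_iff_exists_Ioo_subset' hab] at hs
      obtain ⟨u, hu, hsub⟩ := hs
      obtain ⟨r, har, hru⟩ := EReal.exists_between_coe_real hu
      exact ⟨r, hsub ⟨har, hru⟩⟩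
    have htend : Tendsto (fun t => Real.exp (F t) * ‖g t₀‖) L atTop := by
      have h1 : Tendsto (fun t : ℝ => ∫ s in t..t₀, al s) L atBot := hlim t₀ hat₀ ht₀b
      have h2 : Tendsto F L atTop := by
        have heq : F = fun t => -(∫ s in t..t₀, al s) := funext fun t => by
          rw [hFdef]
          exact intervalIntegral.integral_symm t t₀
        rw [heq]
        exact tendsto_neg_atTop_iff.2 h1
      exact (Real.tendsto_exp_atTop.comp h2).atTop_mul_const hcpos
    have hev1 : ∀ᶠ t : ℝ in L, M < Real.exp (F t) * ‖g t₀‖ :=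
      htend.eventually_gt_atTop M
    have hev2 : ∀ᶠ t : ℝ in L, t ∈ I := by
      have hsets : Iio b ∩ Ioi a ∈ nhdsWithin a (Ioi a) :=
        inter_mem (mem_nhdsWithin_of_mem_nhds (Iio_mem_nhds hab)) self_mem_nhdsWithin
      refine Filter.eventually_of_mem (Filter.preimage_mem_comap hsets) (fun t htm => ?_)
      exact hI1 t htm.2 htm.1
    obtain ⟨t, htI, htM⟩ := (hev2.and hev1).exists
    exact absurd (hwnorm t htI) (not_le.2 htM)

end Stmt16

theorem statement16 (a b : EReal) (hab : a < b) (I : Set ℝ)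
    (hI1 : ∀ x : ℝ, a < (x : EReal) → (x : EReal) < b → x ∈ I)
    (hI2 : ∀ x ∈ I, a ≤ (x : EReal) ∧ (x : EReal) ≤ b)
    (al be : ℝ → ℝ) (hal : ContinuousOn al I) (hbe : ContinuousOn be I)
    (hker : ∀ t ∈ I, IntegrableOn
      (fun s => Real.exp (∫ τ in s..t, al τ)) {s : ℝ | a < (s : EReal) ∧ s < t})
    (hbdd : BddAbove (kappa32 a al '' I)) :
    UlamStable2R I (fun t => !![al t, be t; -(be t), al t]) (sSup (kappa32 a al '' I)) ∧
    ((∀ t₀ : ℝ, a < (t₀ : EReal) → (t₀ : EReal) < b →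
        Tendsto (fun t => ∫ s in t..t₀, al s)
          (Filter.comap (fun x : ℝ => (x : EReal)) (nhdsWithin a (Ioi a))) atBot) →
      ∀ ε : ℝ, 0 < ε → ∀ φ φd : ℝ → Fin 2 → ℝ,
        (∀ t ∈ I, HasDerivWithinAt φ (φd t) I t) →
        ContinuousOn φd I →
        (∀ t ∈ I, enorm2 (φd t - (!![al t, be t; -(be t), al t]).mulVec (φ t)) ≤ ε) →
        ∃ x : ℝ → Fin 2 → ℝ,
          ((∀ t ∈ I, HasDerivWithinAt x ((!![al t, be t; -(be t), al t]).mulVec (x t)) I t) ∧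
            ∀ t ∈ I, enorm2 (φ t - x t) ≤ sSup (kappa32 a al '' I) * ε) ∧
          ∀ y : ℝ → Fin 2 → ℝ,
            ((∀ t ∈ I, HasDerivWithinAt y ((!![al t, be t; -(be t), al t]).mulVec (y t)) I t) ∧
              ∀ t ∈ I, enorm2 (φ t - y t) ≤ sSup (kappa32 a al '' I) * ε) →
            EqOn y x I) := by
  constructor
  · exact ⟨Stmt16.K_pos a b hab I hI1 hI2 al hal hker hbdd,
      fun ε hε φ φd hφ hφd hb =>
        Stmt16.solution_exists a b hab I hI1 hI2 al be hal hbe hker hbdd ε hε φ φd hφ hφd hb⟩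
  · intro hlim ε hε φ φd hφ hφd hb
    obtain ⟨x, hx1, hx2⟩ :=
      Stmt16.solution_exists a b hab I hI1 hI2 al be hal hbe hker hbdd ε hε φ φd hφ hφd hb
    refine ⟨x, ⟨hx1, hx2⟩, ?_⟩
    rintro y ⟨hy1, hy2⟩
    apply Stmt16.rigidity a b hab I hI1 hI2 al be hal hbe hlim x y hx1 hy1
      (2 * (sSup (kappa32 a al '' I) * ε))
    intro t ht
    calc enorm2 (x t - y t)
        ≤ enorm2 (x t - φ t) + enorm2 (φ t - y t) := Stmt16.enorm2_triangle _ _ _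
      _ ≤ sSup (kappa32 a al '' I) * ε + sSup (kappa32 a al '' I) * ε :=
          add_le_add (by rw [Stmt16.enorm2_sub_comm]; exact hx2 t ht) (hy2 t ht)
      _ = 2 * (sSup (kappa32 a al '' I) * ε) := by ring
end
end

section
/- Let −∞ ≤ a < b ≤ ∞ and let I be one of the intervals (a,b), (a,b], [a,b), [a,b]. Let α, β : I → ℝ be continuous and let A(t) be the 2×2 real matrix with rows (α(t), β(t)) and (−β(t), α(t)). Suppose that κ₃₁(t) := ∫_t^b e^{−∫_t^s α(τ) dτ} ds exists for all t ∈ I, that K₃₁ := sup_{t∈I} κ₃₁(t) < ∞, and that lim_{t→b⁻} ∫_{t₀}^t α(s) ds = ∞ for t₀ ∈ (a,b). Then the system x' = A(t)x is Ulam stable on I (with respect to the Euclidean norm on ℝ²), and every Ulam constant K for x' = A(t)x on I satisfies K ≥ K₃₁. -/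
open MeasureTheory Filter Set
open Topology

noncomputable section

/-- `κ₃₁(t) = ∫_t^b exp(-∫_t^s α) ds`. -/
def kappa31 (b : EReal) (al : ℝ → ℝ) (t : ℝ) : ℝ :=
  ∫ s in {s : ℝ | t < s ∧ (s : EReal) < b}, Real.exp (-∫ τ in t..s, al τ)

/-- `(v 0) + (v 1) * I` as a continuous linear map. -/
def toCL : (Fin 2 → ℝ) →L[ℝ] ℂ :=
  Complex.ofRealCLM.comp (ContinuousLinearMap.proj 0) +
    Complex.I • (Complex.ofRealCLM.comp (ContinuousLinearMap.proj 1))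

lemma toCL_apply (v : Fin 2 → ℝ) : toCL v = (v 0 : ℂ) + (v 1 : ℂ) * Complex.I := by
  simp [toCL, mul_comm]

lemma enorm2_eq (v : Fin 2 → ℝ) : enorm2 v = ‖toCL v‖ := by
  rw [toCL_apply, Complex.norm_def, Complex.normSq_apply]
  simp [enorm2, pow_two]

lemma toCL_mulVec (α β : ℝ) (v : Fin 2 → ℝ) :
    toCL ((!![α, β; -β, α]).mulVec v) = ((α : ℂ) - (β : ℂ) * Complex.I) * toCL v := by
  rw [toCL_apply, toCL_apply]
  simp [Matrix.mulVec, Matrix.vecHead, Matrix.vecTail, Fin.sum_univ_two]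
  push_cast
  linear_combination ((β:ℂ) * (v 1 : ℂ)) * Complex.I_sq

lemma toCL_pair (r i : ℝ) : toCL ![r, i] = (r : ℂ) + (i:ℂ) * Complex.I := by
  rw [toCL_apply]; simp

/-- FTC-1 within an order-connected set, for a function continuous on that set. -/
lemma ftc1 {I : Set ℝ} (hOC : OrdConnected I) {f : ℝ → ℝ} (hf : ContinuousOn f I)
    {t₀ t : ℝ} (ht₀ : t₀ ∈ I) (ht : t ∈ I) :
    HasDerivWithinAt (fun u => ∫ s in t₀..u, f s) (f t) I t := by
  have hmeasI : MeasurableSet I := hOC.measurableSet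
  have hint : IntervalIntegrable f volume t₀ t :=
    (hf.mono (hOC.uIcc_subset ht₀ ht)).intervalIntegrable
  have haesm : AEStronglyMeasurable f (volume.restrict I) :=
    hf.aestronglyMeasurable hmeasI
  by_cases hup : ∃ v ∈ I, t < v
  · obtain ⟨v, hv, htv⟩ := hup
    by_cases hdown : ∃ u ∈ I, u < t
    · -- interior-ish point
      obtain ⟨u, hu, hut⟩ := hdown
      have hnhds : I ∈ 𝓝 t := by
        refine mem_nhds_iff.mpr ⟨Ioo u v, ?_, isOpen_Ioo, ⟨hut, htv⟩⟩
        exact fun y hy => hOC.out hu hv ⟨le_of_lt hy.1, le_of_lt hy.2⟩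
      exact (intervalIntegral.integral_hasDerivAt_right hint
        ⟨I, hnhds, haesm⟩ ((hf t ht).continuousAt hnhds)).hasDerivWithinAt
    · -- left endpoint: I ⊆ Ici t
      push_neg at hdown
      have hsub : I ⊆ Ici t := fun y hy => hdown y hy
      have hmem : I ∈ 𝓝[Ioi t] t := by
        refine mem_nhdsWithin.mpr ⟨Iio v, isOpen_Iio, htv, ?_⟩
        rintro y ⟨hy1, hy2⟩
        exact hOC.out ht hv ⟨le_of_lt hy2, le_of_lt hy1⟩
      have := intervalIntegral.integral_hasDerivWithinAt_right (f := f) hint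
        (s := Ici t) (t := Ioi t) ⟨I, hmem, haesm⟩ ((hf t ht).mono_of_mem_nhdsWithin hmem)
      exact this.mono hsub
  · -- right endpoint: I ⊆ Iic t
    push_neg at hup
    have hsub : I ⊆ Iic t := fun y hy => hup y hy
    by_cases hdown : ∃ u ∈ I, u < t
    · obtain ⟨u, hu, hut⟩ := hdown
      have hmem : I ∈ 𝓝[Iic t] t := by
        refine mem_nhdsWithin.mpr ⟨Ioi u, isOpen_Ioi, hut, ?_⟩
        rintro y ⟨hy1, hy2⟩
        exact hOC.out hu ht ⟨le_of_lt hy1, hy2⟩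
      have := intervalIntegral.integral_hasDerivWithinAt_right (f := f) hint
        (s := Iic t) (t := Iic t) ⟨I, hmem, haesm⟩
        ((hf t ht).mono_of_mem_nhdsWithin hmem)
      exact this.mono hsub
    · push_neg at hdown
      have hI : I = {t} := by
        apply subset_antisymm
        · exact fun y hy => le_antisymm (hup y hy) (hdown y hy)
        · exact singleton_subset_iff.mpr ht
      rw [hI]
      have : HasFDerivWithinAt (fun u => ∫ s in t₀..u, f s)
          ((1 : ℝ →L[ℝ] ℝ).smulRight (f t)) {t} t := by
        simp only [HasFDerivWithinAt, nhdsWithin_singleton, hasFDerivAtFilter_iff_isLittleO,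
          Asymptotics.isLittleO_pure]
        simp
      exact this

/-- FTC-2 within an order-connected set. -/
lemma ftc2 {I : Set ℝ} (hOC : OrdConnected I) {E : Type*} [NormedAddCommGroup E]
    [NormedSpace ℝ E] [CompleteSpace E] {f f' : ℝ → E}
    (hd : ∀ t ∈ I, HasDerivWithinAt f (f' t) I t) (hc : ContinuousOn f' I)
    {u v : ℝ} (hu : u ∈ I) (hv : v ∈ I) :
    ∫ s in u..v, f' s = f v - f u := by
  have key : ∀ u v : ℝ, u ∈ I → v ∈ I → u ≤ v → ∫ s in u..v, f' s = f v - f u := by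
    intro u v hu hv huv
    have hsub : Icc u v ⊆ I := hOC.out hu hv
    refine intervalIntegral.integral_eq_sub_of_hasDeriv_right_of_le huv
      (fun x hx => ((hd x (hsub hx)).continuousWithinAt).mono hsub)
      (fun x hx => ?_) ?_
    · have hnhds : I ∈ 𝓝 x :=
        mem_nhds_iff.mpr ⟨Ioo u v, fun y hy => hsub (Ioo_subset_Icc_self hy), isOpen_Ioo, hx⟩
      exact ((hd x (hsub (Ioo_subset_Icc_self hx))).hasDerivAt hnhds).hasDerivWithinAt
    · have : ContinuousOn f' (uIcc u v) := hc.mono (hOC.uIcc_subset hu hv)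
      exact this.intervalIntegrable
  rcases le_total u v with h | h
  · exact key u v hu hv h
  · rw [intervalIntegral.integral_symm, key v u hv hu h]
    abel

lemma measurableSet_P (b : EReal) : MeasurableSet {s : ℝ | (s : EReal) < b} :=
  continuous_coe_real_ereal.measurable measurableSet_Iio

/-- Splitting a tail integral at a point. -/
lemma tail_formula {E : Type*} [NormedAddCommGroup E] [NormedSpace ℝ E]
    {b : EReal} {g : ℝ → E} {t₀ t : ℝ}
    (ht₀b : (t₀ : EReal) < b) (htb : (t : EReal) ≤ b)
    (hg0 : IntegrableOn g (Ioi t₀ ∩ {s : ℝ | (s : EReal) < b}))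
    (hgc : IntegrableOn g (uIcc t₀ t)) :
    ∫ s in Ioi t ∩ {s : ℝ | (s : EReal) < b}, g s
      = (∫ s in Ioi t₀ ∩ {s : ℝ | (s : EReal) < b}, g s) - ∫ s in t₀..t, g s := by
  set P := {s : ℝ | (s : EReal) < b} with hPdef
  have hP : MeasurableSet P := measurableSet_P b
  rcases le_total t₀ t with h | h
  · have hsplit : Ioi t₀ ∩ P = (Ioc t₀ t ∩ P) ∪ (Ioi t ∩ P) := by
      rw [← Ioc_union_Ioi_eq_Ioi h, union_inter_distrib_right]
    have hdisj : Disjoint (Ioc t₀ t ∩ P) (Ioi t ∩ P) := by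
      refine Set.disjoint_left.mpr ?_
      rintro s ⟨hs1, _⟩ ⟨hs2, _⟩
      exact absurd hs1.2 (not_le.mpr hs2)
    have h1 : IntegrableOn g (Ioc t₀ t ∩ P) := by
      refine hgc.mono_set ?_
      rw [uIcc_of_le h]
      exact inter_subset_left.trans Ioc_subset_Icc_self
    have h2 : IntegrableOn g (Ioi t ∩ P) :=
      hg0.mono_set (inter_subset_inter (Ioi_subset_Ioi h) Subset.rfl)
    have hae : (Ioc t₀ t ∩ P : Set ℝ) =ᵐ[volume] (Ioc t₀ t : Set ℝ) := by
      rw [MeasureTheory.ae_eq_set]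
      constructor
      · refine measure_mono_null (t := (∅ : Set ℝ)) ?_ measure_empty
        rintro s ⟨⟨hs1, _⟩, hs2⟩
        exact absurd hs1 hs2
      · refine measure_mono_null (t := {t}) ?_ (measure_singleton t)
        rintro s ⟨hs1, hs2⟩
        have hsP : ¬ (s : EReal) < b := fun hc => hs2 ⟨hs1, hc⟩
        have : (s : EReal) = t := le_antisymm (EReal.coe_le_coe_iff.mpr hs1.2)
          (le_trans htb (not_lt.mp hsP))
        simp [EReal.coe_eq_coe_iff.mp this]
    rw [hsplit, setIntegral_union hdisj (measurableSet_Ioi.inter hP) h1 h2,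
      setIntegral_congr_set hae, intervalIntegral.integral_of_le h]
    abel
  · have hsplit : Ioi t ∩ P = (Ioc t t₀ ∩ P) ∪ (Ioi t₀ ∩ P) := by
      rw [← Ioc_union_Ioi_eq_Ioi h, union_inter_distrib_right]
    have hPIoc : Ioc t t₀ ∩ P = Ioc t t₀ := by
      refine inter_eq_left.mpr fun s hs => ?_
      exact lt_of_le_of_lt (EReal.coe_le_coe_iff.mpr hs.2) ht₀b
    have hdisj : Disjoint (Ioc t t₀ ∩ P) (Ioi t₀ ∩ P) := by
      refine Set.disjoint_left.mpr ?_
      rintro s ⟨hs1, _⟩ ⟨hs2, _⟩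
      exact absurd hs1.2 (not_le.mpr hs2)
    have h1 : IntegrableOn g (Ioc t t₀ ∩ P) := by
      refine hgc.mono_set ?_
      rw [uIcc_of_ge h]
      exact inter_subset_left.trans Ioc_subset_Icc_self
    rw [hsplit, setIntegral_union hdisj (measurableSet_Ioi.inter hP) h1 hg0, hPIoc,
      intervalIntegral.integral_symm, intervalIntegral.integral_of_le h]
    abel


/-- complex-to-pi derivative transfer -/
lemma pi_of_complex {I : Set ℝ} {X : ℝ → ℂ} {d : ℂ} {t : ℝ}
    (h : HasDerivWithinAt X d I t) :
    HasDerivWithinAt (fun u => ![(X u).re, (X u).im]) ![d.re, d.im] I t := by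
  refine hasDerivWithinAt_pi.mpr fun i => ?_
  fin_cases i
  · simpa [Function.comp_def] using Complex.reCLM.hasFDerivAt.comp_hasDerivWithinAt t h
  · simpa [Function.comp_def] using Complex.imCLM.hasFDerivAt.comp_hasDerivWithinAt t h

theorem statement17 (a b : EReal) (hab : a < b) (I : Set ℝ)
    (hI1 : ∀ x : ℝ, a < (x : EReal) → (x : EReal) < b → x ∈ I)
    (hI2 : ∀ x ∈ I, a ≤ (x : EReal) ∧ (x : EReal) ≤ b)
    (al be : ℝ → ℝ) (hal : ContinuousOn al I) (hbe : ContinuousOn be I)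
    (hker : ∀ t ∈ I, IntegrableOn
      (fun s => Real.exp (-∫ τ in t..s, al τ)) {s : ℝ | t < s ∧ (s : EReal) < b})
    (hbdd : BddAbove (kappa31 b al '' I))
    (hlim : ∀ t₀ : ℝ, a < (t₀ : EReal) → (t₀ : EReal) < b →
        Tendsto (fun t => ∫ s in t₀..t, al s)
          (Filter.comap (fun x : ℝ => (x : EReal)) (nhdsWithin b (Iio b))) atTop) :
    UlamStable2R I (fun t => !![al t, be t; -(be t), al t]) (sSup (kappa31 b al '' I)) ∧
    ∀ K : ℝ, UlamStable2R I (fun t => !![al t, be t; -(be t), al t]) K → sSup (kappa31 b al '' I) ≤ K := by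
  obtain ⟨t₀, ht₀a, ht₀b⟩ := EReal.exists_between_coe_real hab
  have ht₀I : t₀ ∈ I := hI1 t₀ ht₀a ht₀b
  have hOC : OrdConnected I := by
    constructor
    rintro x hx y hy z ⟨hxz, hzy⟩
    have hax : a ≤ (x : EReal) := (hI2 x hx).1
    have hyb : (y : EReal) ≤ b := (hI2 y hy).2
    rcases eq_or_lt_of_le (hax.trans (EReal.coe_le_coe_iff.mpr hxz)) with h1 | h1
    · have : x = z := EReal.coe_eq_coe_iff.mp
        (le_antisymm (EReal.coe_le_coe_iff.mpr hxz) (h1 ▸ hax))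
      exact this ▸ hx
    rcases eq_or_lt_of_le ((EReal.coe_le_coe_iff.mpr hzy).trans hyb) with h2 | h2
    · have : y = z := EReal.coe_eq_coe_iff.mp
        (le_antisymm (h2 ▸ hyb) (EReal.coe_le_coe_iff.mpr hzy))
      exact this ▸ hy
    exact hI1 z h1 h2
  set P := {s : ℝ | (s : EReal) < b} with hPdef
  have hP : MeasurableSet P := measurableSet_P b
  have hTmeas : ∀ t : ℝ, MeasurableSet (Ioi t ∩ P) := fun t => measurableSet_Ioi.inter hP
  have hsub : ∀ {t : ℝ}, t ∈ I → Ioi t ∩ P ⊆ I := by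
    intro t ht s hs
    exact hI1 s (lt_of_le_of_lt (hI2 t ht).1 (EReal.coe_lt_coe_iff.mpr hs.1)) hs.2
  set L := fun u : ℝ => ∫ s in t₀..u, al s with hLdef
  set B := fun u : ℝ => ∫ s in t₀..u, be s with hBdef
  have hLd : ∀ t ∈ I, HasDerivWithinAt L (al t) I t := fun t ht => ftc1 hOC hal ht₀I ht
  have hBd : ∀ t ∈ I, HasDerivWithinAt B (be t) I t := fun t ht => ftc1 hOC hbe ht₀I ht
  have hLc : ContinuousOn L I := fun t ht => (hLd t ht).continuousWithinAt
  have hBc : ContinuousOn B I := fun t ht => (hBd t ht).continuousWithinAt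
  set g := fun s : ℝ => Real.exp (-(L s)) with hgdef
  have hgc : ContinuousOn g I := Real.continuous_exp.comp_continuousOn hLc.neg
  have hgI : IntegrableOn g (Ioi t₀ ∩ P) := hker t₀ ht₀I
  have hgt : ∀ t ∈ I, IntegrableOn g (Ioi t ∩ P) := by
    intro t ht
    rcases le_total t₀ t with h | h
    · exact hgI.mono_set (inter_subset_inter (Ioi_subset_Ioi h) Subset.rfl)
    · have h1 : IntegrableOn g (Ioc t t₀) :=
        ((hgc.mono (hOC.out ht ht₀I)).integrableOn_compact isCompact_Icc).mono_set
          Ioc_subset_Icc_self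
      have hsub2 : Ioi t ∩ P ⊆ Ioc t t₀ ∪ (Ioi t₀ ∩ P) := by
        rintro s ⟨hs1, hs2⟩
        rcases lt_or_ge t₀ s with h' | h'
        · exact Or.inr ⟨h', hs2⟩
        · exact Or.inl ⟨hs1, h'⟩
      exact (h1.union hgI).mono_set hsub2
  have halint : ∀ {u v : ℝ}, u ∈ I → v ∈ I → IntervalIntegrable al volume u v :=
    fun hu hv => (hal.mono (hOC.uIcc_subset hu hv)).intervalIntegrable
  have hκ : ∀ t ∈ I, kappa31 b al t = Real.exp (L t) * ∫ s in Ioi t ∩ P, g s := by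
    intro t ht
    have hset : {s : ℝ | t < s ∧ (s : EReal) < b} = Ioi t ∩ P := rfl
    rw [kappa31, hset, ← MeasureTheory.integral_const_mul]
    refine setIntegral_congr_fun (hTmeas t) fun s hs => ?_
    have hsI : s ∈ I := hsub ht hs
    have hii : ∫ τ in t..s, al τ = L s - L t :=
      eq_sub_of_add_eq' (intervalIntegral.integral_add_adjacent_intervals
        (halint ht₀I ht) (halint ht hsI))
    rw [hii, hgdef, ← Real.exp_add]
    congr 1
    ring
  have hκle : ∀ t ∈ I, kappa31 b al t ≤ sSup (kappa31 b al '' I) :=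
    fun t ht => le_csSup hbdd ⟨t, ht, rfl⟩
  have hKpos : 0 < sSup (kappa31 b al '' I) := by
    have h0 : 0 < kappa31 b al t₀ := by
      obtain ⟨m, hm1, hm2⟩ := EReal.exists_between_coe_real ht₀b
      rw [kappa31]
      refine (setIntegral_pos_iff_support_of_nonneg_ae
        (Filter.Eventually.of_forall fun s => (Real.exp_pos _).le) (hker t₀ ht₀I)).mpr ?_
      have hsupp : (Function.support fun s : ℝ => Real.exp (-∫ τ in t₀..s, al τ)) = univ := by
        ext s; simp [Function.support, (Real.exp_pos _).ne']
      rw [hsupp, univ_inter]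
      have hmsub : Ioo t₀ m ⊆ {s : ℝ | t₀ < s ∧ (s : EReal) < b} :=
        fun s hs => ⟨hs.1, lt_trans (EReal.coe_lt_coe_iff.mpr hs.2) hm2⟩
      refine lt_of_lt_of_le ?_ (measure_mono hmsub)
      rw [Real.volume_Ioo]
      simp [sub_pos, EReal.coe_lt_coe_iff.mp hm1]
    exact lt_of_lt_of_le h0 (hκle t₀ ht₀I)
  set lam := fun u : ℝ => (al u : ℂ) - (be u : ℂ) * Complex.I with hlamdef
  set Lam := fun u : ℝ => (L u : ℂ) - (B u : ℂ) * Complex.I with hLamdef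
  have hlamc : ContinuousOn lam I :=
    (Complex.continuous_ofReal.comp_continuousOn hal).sub
      ((Complex.continuous_ofReal.comp_continuousOn hbe).mul continuousOn_const)
  have hLamd : ∀ t ∈ I, HasDerivWithinAt Lam (lam t) I t := by
    intro t ht
    exact (Complex.ofRealCLM.hasFDerivAt.comp_hasDerivWithinAt t (hLd t ht)).sub
      ((Complex.ofRealCLM.hasFDerivAt.comp_hasDerivWithinAt t (hBd t ht)).mul_const Complex.I)
  have hLamc : ContinuousOn Lam I := fun t ht => (hLamd t ht).continuousWithinAt
  have hLamre : ∀ u : ℝ, (Lam u).re = L u := by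
    intro u; simp [hLamdef]
  have hexpnorm : ∀ u : ℝ, ‖Complex.exp (-(Lam u))‖ = Real.exp (-(L u)) := by
    intro u
    rw [Complex.norm_exp, Complex.neg_re, hLamre]
  have hexpnorm' : ∀ u : ℝ, ‖Complex.exp (Lam u)‖ = Real.exp (L u) := by
    intro u
    rw [Complex.norm_exp, hLamre]
  constructor
  · refine ⟨hKpos, ?_⟩
    intro ε hε φ φd hφd hφdc hdef
    set Φ := fun u : ℝ => toCL (φ u) with hΦdef
    set Φd := fun u : ℝ => toCL (φd u) with hΦddef
    have hΦd : ∀ t ∈ I, HasDerivWithinAt Φ (Φd t) I t :=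
      fun t ht => toCL.hasFDerivAt.comp_hasDerivWithinAt t (hφd t ht)
    have hΦc : ContinuousOn Φ I := fun t ht => (hΦd t ht).continuousWithinAt
    have hΦdc : ContinuousOn Φd I := toCL.continuous.comp_continuousOn hφdc
    set ψ := fun u : ℝ => Φ u * Complex.exp (-(Lam u)) with hψdef
    set ψd := fun u : ℝ => (Φd u - lam u * Φ u) * Complex.exp (-(Lam u)) with hψddef
    have hψd : ∀ t ∈ I, HasDerivWithinAt ψ (ψd t) I t := by
      intro t ht
      have h1 := (hΦd t ht).fun_mul ((hLamd t ht).fun_neg).cexp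
      convert h1 using 1
      · rfl
      simp only [hψddef]
      ring
    have hψdc : ContinuousOn ψd I :=
      (hΦdc.sub (hlamc.mul hΦc)).mul (hLamc.neg).cexp
    have hdefC : ∀ t ∈ I, ‖Φd t - lam t * Φ t‖ ≤ ε := by
      intro t ht
      have h := hdef t ht
      rw [enorm2_eq, map_sub, toCL_mulVec] at h
      exact h
    have hψnorm : ∀ s ∈ I, ‖ψd s‖ ≤ ε * g s := by
      intro s hs
      rw [hψddef]
      simp only
      rw [norm_mul, hexpnorm]
      exact mul_le_mul_of_nonneg_right (hdefC s hs) (Real.exp_pos _).le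
    have hψdI : ∀ t ∈ I, IntegrableOn ψd (Ioi t ∩ P) := by
      intro t ht
      refine Integrable.mono' ((hgt t ht).const_mul ε) ?_ ?_
      · exact (hψdc.mono (hsub ht)).aestronglyMeasurable (hTmeas t)
      · exact (ae_restrict_mem (hTmeas t)).mono fun s hs => hψnorm s (hsub ht hs)
    set c := ψ t₀ + ∫ s in Ioi t₀ ∩ P, ψd s with hcdef
    set X := fun u : ℝ => c * Complex.exp (Lam u) with hXdef
    refine ⟨fun u => ![(X u).re, (X u).im], ?_, ?_⟩
    · intro t ht
      have hXd : HasDerivWithinAt X (lam t * X t) I t := by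
        have h1 := ((hLamd t ht).cexp).const_mul c
        convert h1 using 1
        · rfl
        simp only [hXdef]
        ring
      have h2 := pi_of_complex hXd
      convert h2 using 1
      funext i
      fin_cases i <;>
        simp [Matrix.mulVec, dotProduct, Fin.sum_univ_two, hlamdef,
          Complex.mul_re, Complex.mul_im] <;> ring
    · intro t ht
      have htb : (t : EReal) ≤ b := (hI2 t ht).2
      have hftc : ∫ s in t₀..t, ψd s = ψ t - ψ t₀ := ftc2 hOC hψd hψdc ht₀I ht
      have htail := tail_formula ht₀b htb (hψdI t₀ ht₀I)
        ((hψdc.mono (hOC.uIcc_subset ht₀I ht)).integrableOn_compact isCompact_uIcc)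
      have hψc : ψ t - c = -∫ s in Ioi t ∩ P, ψd s := by
        rw [htail, hftc, hcdef]
        ring
      have hb1 : ‖ψ t - c‖ ≤ ε * ∫ s in Ioi t ∩ P, g s := by
        rw [hψc, norm_neg]
        refine le_trans (norm_integral_le_integral_norm _) ?_
        rw [← MeasureTheory.integral_const_mul]
        refine setIntegral_mono_on (hψdI t ht).norm ((hgt t ht).const_mul ε) (hTmeas t)
          fun s hs => hψnorm s (hsub ht hs)
      have hXt : toCL ![(X t).re, (X t).im] = X t := by
        rw [toCL_pair]
        exact Complex.re_add_im _
      have hΦX : Φ t - X t = (ψ t - c) * Complex.exp (Lam t) := by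
        have hψΦ : ψ t * Complex.exp (Lam t) = Φ t := by
          simp only [hψdef]
          rw [mul_assoc, ← Complex.exp_add]
          simp
        rw [sub_mul, hψΦ, hXdef]
      calc enorm2 (φ t - fun i => ![(X t).re, (X t).im] i)
          = ‖Φ t - X t‖ := by
            have h5 : toCL (fun i => ![(X t).re, (X t).im] i) = X t := hXt
            rw [enorm2_eq, map_sub, h5]
        _ = ‖ψ t - c‖ * Real.exp (L t) := by rw [hΦX, norm_mul, hexpnorm']
        _ ≤ (ε * ∫ s in Ioi t ∩ P, g s) * Real.exp (L t) :=
            mul_le_mul_of_nonneg_right hb1 (Real.exp_pos _).le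
        _ = ε * kappa31 b al t := by rw [hκ t ht]; ring
        _ ≤ ε * sSup (kappa31 b al '' I) :=
            mul_le_mul_of_nonneg_left (hκle t ht) hε.le
        _ = sSup (kappa31 b al '' I) * ε := mul_comm _ _
  · rintro K ⟨hKpos', hK⟩
    set J := fun t : ℝ => ∫ s in Ioi t ∩ P, g s with hJdef
    have hJnonneg : ∀ t : ℝ, 0 ≤ J t :=
      fun t => setIntegral_nonneg (hTmeas t) fun s _ => (Real.exp_pos _).le
    have hJform : ∀ t ∈ I, J t = J t₀ - ∫ s in t₀..t, g s := by
      intro t ht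
      exact tail_formula ht₀b (hI2 t ht).2 hgI
        ((hgc.mono (hOC.uIcc_subset ht₀I ht)).integrableOn_compact isCompact_uIcc)
    have hJd : ∀ t ∈ I, HasDerivWithinAt J (-(g t)) I t := by
      intro t ht
      have h1 : HasDerivWithinAt (fun u => J t₀ - ∫ s in t₀..u, g s) (-(g t)) I t :=
        (ftc1 hOC hgc ht₀I ht).const_sub (J t₀)
      exact h1.congr (fun u hu => hJform u hu) (hJform t ht)
    have hJc : ContinuousOn J I := fun t ht => (hJd t ht).continuousWithinAt
    set Φ := fun u : ℝ => -(Complex.exp (Lam u) * (J u : ℂ)) with hΦdef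
    set Φd := fun u : ℝ => lam u * Φ u + Complex.exp (-(B u : ℂ) * Complex.I) with hΦddef
    have hexpB : ∀ t : ℝ, Complex.exp (Lam t) * ((Real.exp (-(L t)) : ℝ) : ℂ)
        = Complex.exp (-(B t : ℂ) * Complex.I) := by
      intro t
      rw [Complex.ofReal_exp, ← Complex.exp_add]
      congr 1
      push_cast [hLamdef]
      ring
    have hΦd : ∀ t ∈ I, HasDerivWithinAt Φ (Φd t) I t := by
      intro t ht
      have h1 := (((hLamd t ht).cexp).fun_mul
        (Complex.ofRealCLM.hasFDerivAt.comp_hasDerivWithinAt t (hJd t ht))).fun_neg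
      convert h1 using 1
      show lam t * Φ t + Complex.exp (-(B t : ℂ) * Complex.I) = _
      rw [← hexpB t]
      simp only [hΦdef, hgdef, Function.comp, Complex.ofRealCLM_apply, Complex.ofReal_neg,
        Complex.ofReal_exp]
      push_cast
      ring
      rfl
      rfl
    have hΦc : ContinuousOn Φ I := fun t ht => (hΦd t ht).continuousWithinAt
    have hΦdc : ContinuousOn Φd I := by
      refine (hlamc.mul hΦc).add ?_
      exact Complex.continuous_exp.comp_continuousOn
        (((Complex.continuous_ofReal.comp_continuousOn hBc).neg).mul continuousOn_const)
    set φ := fun u : ℝ => ![(Φ u).re, (Φ u).im] with hφdef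
    set φdd := fun u : ℝ => ![(Φd u).re, (Φd u).im] with hφdddef
    have hφd : ∀ t ∈ I, HasDerivWithinAt φ (φdd t) I t := fun t ht => pi_of_complex (hΦd t ht)
    have hφdc : ContinuousOn φdd I := by
      refine continuousOn_pi.mpr fun i => ?_
      fin_cases i
      · simpa [Function.comp_def, hφdddef] using Complex.continuous_re.comp_continuousOn hΦdc
      · simpa [Function.comp_def, hφdddef] using Complex.continuous_im.comp_continuousOn hΦdc
    have htoCΦ : ∀ u : ℝ, toCL (φ u) = Φ u := by
      intro u
      simp only [hφdef]
      rw [toCL_pair]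
      exact Complex.re_add_im _
    have htoCΦd : ∀ u : ℝ, toCL (φdd u) = Φd u := by
      intro u
      simp only [hφdddef]
      rw [toCL_pair]
      exact Complex.re_add_im _
    have hdef1 : ∀ t ∈ I, enorm2 (φdd t - (!![al t, be t; -(be t), al t]).mulVec (φ t)) ≤ 1 := by
      intro t ht
      rw [enorm2_eq, map_sub, toCL_mulVec, htoCΦd t, htoCΦ t]
      have h2 : Φd t - lam t * Φ t = Complex.exp (-(B t : ℂ) * Complex.I) := by
        rw [hΦddef]
        ring
      rw [show ((al t : ℂ) - (be t : ℂ) * Complex.I) = lam t from rfl, h2,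
        Complex.norm_exp]
      simp
    obtain ⟨x, hxd, hxb⟩ := hK 1 one_pos φ φdd hφd hφdc hdef1
    have hXd : ∀ t ∈ I, HasDerivWithinAt (fun u => toCL (x u)) (lam t * toCL (x t)) I t := by
      intro t ht
      have h1 := toCL.hasFDerivAt.comp_hasDerivWithinAt t (hxd t ht)
      rwa [toCL_mulVec] at h1
    set W := fun u : ℝ => toCL (x u) * Complex.exp (-(Lam u)) with hWdef
    have hWd : ∀ t ∈ I, HasDerivWithinAt W 0 I t := by
      intro t ht
      have h1 := (hXd t ht).fun_mul ((hLamd t ht).fun_neg).cexp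
      convert h1 using 1
      · rfl
      ring
    have hWconst : ∀ t ∈ I, W t = W t₀ := by
      intro t ht
      have h0 := Convex.norm_image_sub_le_of_norm_hasDerivWithin_le
        (f' := fun _ => (0 : ℂ)) (C := 0) (fun u hu => hWd u hu) (fun u _ => by simp)
        hOC.convex ht₀I ht
      have h1 : ‖W t - W t₀‖ ≤ 0 := by simpa using h0
      exact sub_eq_zero.mp (norm_le_zero_iff.mp h1)
    set c := W t₀ with hcdef
    have hXc : ∀ t ∈ I, toCL (x t) = c * Complex.exp (Lam t) := by
      intro t ht
      have h1 : W t * Complex.exp (Lam t) = toCL (x t) := by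
        simp only [hWdef]
        rw [mul_assoc, ← Complex.exp_add]
        simp
      rw [← h1, hWconst t ht]
    have hbound : ∀ t ∈ I, Real.exp (L t) * ‖(J t : ℂ) + c‖ ≤ K := by
      intro t ht
      have h1 := hxb t ht
      rw [mul_one, enorm2_eq, map_sub, htoCΦ t, hXc t ht] at h1
      have h2 : Φ t - c * Complex.exp (Lam t)
          = -(Complex.exp (Lam t) * ((J t : ℂ) + c)) := by
        simp only [hΦdef]
        ring
      rwa [h2, norm_neg, norm_mul, hexpnorm'] at h1
    have hc0 : c = 0 := by
      by_contra hc
      have hcpos : 0 < ‖c‖ := norm_pos_iff.mpr hc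
      obtain ⟨seq, hseqI, hseqmono, hseqtend, hseqempty⟩ :
          ∃ seq : ℕ → ℝ, (∀ n, seq n ∈ I) ∧ Monotone seq ∧
            Tendsto (fun n => (seq n : EReal)) atTop (𝓝[Iio b] b) ∧
            (⋂ n, Ioi (seq n) ∩ P) = (∅ : Set ℝ) := by
        by_cases hbtop : b = ⊤
        · subst hbtop
          refine ⟨fun n => t₀ + n, fun n => ?_, fun n m h => ?_, ?_, ?_⟩
          · refine hI1 _ (lt_of_lt_of_le ht₀a (EReal.coe_le_coe_iff.mpr ?_)) (EReal.coe_lt_top _)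
            exact le_add_of_nonneg_right n.cast_nonneg
          · exact add_le_add_right (Nat.cast_le.mpr h) t₀
          · rw [tendsto_nhdsWithin_iff]
            constructor
            · rw [EReal.nhds_top_basis.tendsto_right_iff]
              rintro y -
              obtain ⟨N, hN⟩ := exists_nat_gt (y - t₀)
              refine Filter.eventually_atTop.mpr ⟨N, fun n hn => ?_⟩
              have : y < t₀ + n := by
                have : (N : ℝ) ≤ n := Nat.cast_le.mpr hn
                linarith
              exact EReal.coe_lt_coe_iff.mpr this
            · exact Filter.Eventually.of_forall fun n => EReal.coe_lt_top _
          · rw [eq_empty_iff_forall_notMem]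
            intro s hs
            obtain ⟨n, hn⟩ := exists_nat_gt (s - t₀)
            have h2 := (mem_iInter.mp hs n).1
            simp only [mem_Ioi] at h2
            linarith
        · have hbbot : b ≠ ⊥ := fun h => absurd (h ▸ hab) (by simp)
          set b' := b.toReal with hb'def
          have hb' : (b' : EReal) = b := EReal.coe_toReal hbtop hbbot
          have ht₀b' : t₀ < b' := EReal.coe_lt_coe_iff.mp (hb' ▸ ht₀b)
          refine ⟨fun n => max t₀ (b' - 1 / (n + 1)), fun n => ?_, fun n m h => ?_, ?_, ?_⟩
          · have hlt : max t₀ (b' - 1 / (n + 1 : ℝ)) < b' := by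
              refine max_lt ht₀b' ?_
              have : (0 : ℝ) < 1 / (n + 1) := by positivity
              linarith
            refine hI1 _ (lt_of_lt_of_le ht₀a (EReal.coe_le_coe_iff.mpr (le_max_left _ _))) ?_
            rw [← hb']
            exact EReal.coe_lt_coe_iff.mpr hlt
          · refine max_le_max le_rfl (sub_le_sub_left ?_ b')
            refine one_div_le_one_div_of_le (by positivity) ?_
            exact add_le_add_left (Nat.cast_le.mpr h) 1
          · have hreal : Tendsto (fun n : ℕ => max t₀ (b' - 1 / (n + 1))) atTop (𝓝 b') := by
              have h1 : Tendsto (fun n : ℕ => b' - 1 / (n + 1 : ℝ)) atTop (𝓝 (b' - 0)) :=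
                tendsto_const_nhds.sub tendsto_one_div_add_atTop_nhds_zero_nat
              rw [sub_zero] at h1
              have h2 := (tendsto_const_nhds (x := t₀) (f := atTop (α := ℕ))).max h1
              rwa [max_eq_right ht₀b'.le] at h2
            rw [tendsto_nhdsWithin_iff]
            constructor
            · rw [← hb']
              exact (continuous_coe_real_ereal.tendsto b').comp hreal
            · refine Filter.Eventually.of_forall fun n => ?_
              rw [← hb', mem_Iio]
              refine EReal.coe_lt_coe_iff.mpr (max_lt ht₀b' ?_)
              have : (0 : ℝ) < 1 / (n + 1) := by positivity
              linarith
          · rw [eq_empty_iff_forall_notMem]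
            intro s hs
            have hsb : s < b' := by
              have h2 := (mem_iInter.mp hs 0).2
              have : (s : EReal) < b := h2
              rw [← hb'] at this
              exact EReal.coe_lt_coe_iff.mp this
            obtain ⟨n, hn⟩ := exists_nat_one_div_lt (sub_pos.mpr hsb)
            have h2 := (mem_iInter.mp hs n).1
            simp only [mem_Ioi] at h2
            have h3 : b' - 1 / (n + 1) ≤ max t₀ (b' - 1 / (n + 1 : ℝ)) := le_max_right _ _
            linarith
      have hJ0 : Tendsto (fun n => J (seq n)) atTop (𝓝 0) := by
        have h1 := tendsto_setIntegral_of_antitone (f := g) (μ := volume)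
          (s := fun n => Ioi (seq n) ∩ P) (fun n => hTmeas (seq n))
          (fun n m hnm => inter_subset_inter (Ioi_subset_Ioi (hseqmono hnm)) Subset.rfl)
          ⟨0, hgt (seq 0) (hseqI 0)⟩
        rw [hseqempty] at h1
        simpa using h1
      have hLtop : Tendsto (fun n => L (seq n)) atTop atTop := by
        refine (hlim t₀ ht₀a ht₀b).comp ?_
        exact tendsto_comap_iff.mpr hseqtend
      have h1 : ∀ᶠ n in atTop, J (seq n) < ‖c‖ / 2 :=
        hJ0.eventually (gt_mem_nhds (by positivity))
      have h2 : ∀ᶠ n in atTop, Real.log ((K + 1) / (‖c‖ / 2)) ≤ L (seq n) :=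
        hLtop.eventually_ge_atTop _
      obtain ⟨n, hn1, hn2⟩ := (h1.and h2).exists
      have hKb := hbound (seq n) (hseqI n)
      have h4 : ‖((J (seq n) : ℝ) : ℂ)‖ = J (seq n) := by
        rw [Complex.norm_real, Real.norm_eq_abs]
        exact abs_of_nonneg (hJnonneg _)
      have hnorm : ‖c‖ / 2 ≤ ‖((J (seq n) : ℝ) : ℂ) + c‖ := by
        have h3 := norm_sub_norm_le c (-((J (seq n) : ℝ) : ℂ))
        rw [sub_neg_eq_add, norm_neg, h4, add_comm] at h3
        linarith
      have hexpM : Real.exp (Real.log ((K + 1) / (‖c‖ / 2))) * (‖c‖ / 2) = K + 1 := by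
        rw [Real.exp_log (by positivity)]
        exact div_mul_cancel₀ _ (by positivity : (0:ℝ) < ‖c‖ / 2).ne'
      have hfinal : K + 1 ≤ K := by
        calc K + 1 = Real.exp (Real.log ((K + 1) / (‖c‖ / 2))) * (‖c‖ / 2) := hexpM.symm
          _ ≤ Real.exp (L (seq n)) * ‖((J (seq n) : ℝ) : ℂ) + c‖ :=
              mul_le_mul (Real.exp_le_exp.mpr hn2) hnorm (by positivity) (Real.exp_pos _).le
          _ ≤ K := hKb
      linarith
    refine csSup_le ⟨kappa31 b al t₀, ⟨t₀, ht₀I, rfl⟩⟩ ?_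
    rintro y ⟨t, ht, rfl⟩
    have h1 := hbound t ht
    rw [hc0, add_zero] at h1
    have h4 : ‖((J t : ℝ) : ℂ)‖ = J t := by
      rw [Complex.norm_real, Real.norm_eq_abs]
      exact abs_of_nonneg (hJnonneg _)
    rw [h4] at h1
    rw [hκ t ht]
    exact h1
end
end

section
/- Let α, β ∈ ℝ with α ≠ 0, and let A be the constant 2×2 real matrix with rows (α, β) and (−β, α). Then the system x' = Ax is Ulam stable on ℝ with respect to the Euclidean norm on ℝ², and its best (minimal) Ulam constant is K_{c3} := 1/|α|; that is, K_{c3} is an Ulam constant for x' = Ax on ℝ and every Ulam constant K for x' = Ax on ℝ satisfies K ≥ K_{c3}. -/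
open MeasureTheory Filter Set

noncomputable section

def toC (v : Fin 2 → ℝ) : ℂ := ⟨v 0, v 1⟩

lemma norm_toC (v : Fin 2 → ℝ) : ‖toC v‖ = enorm2 v := by
  rw [Complex.norm_def, Complex.normSq_apply, enorm2]
  norm_num [toC, sq]

lemma toC_sub (v w : Fin 2 → ℝ) : toC (v - w) = toC v - toC w := by
  simp [toC, Complex.ext_iff]

lemma toC_mulVec (al be : ℝ) (v : Fin 2 → ℝ) :
    toC ((!![al, be; -be, al]).mulVec v) = (⟨al, -be⟩ : ℂ) * toC v := by
  simp [toC, Matrix.mulVec, dotProduct, Fin.sum_univ_two, Complex.ext_iff,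
    Complex.mul_re, Complex.mul_im]
  ring

lemma toC_inj {v w : Fin 2 → ℝ} (h : toC v = toC w) : v = w := by
  funext i
  fin_cases i
  · exact congrArg Complex.re h
  · exact congrArg Complex.im h

lemma toC_reim (z : ℂ) : toC ![z.re, z.im] = z := by
  simp [toC, Complex.ext_iff]

lemma hasDerivAt_toC {φ : ℝ → Fin 2 → ℝ} {d : Fin 2 → ℝ} {t : ℝ}
    (h : HasDerivAt φ d t) : HasDerivAt (fun s => toC (φ s)) (toC d) t := by
  have h0 := (hasDerivAt_pi.1 h) 0
  have h1 := (hasDerivAt_pi.1 h) 1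
  have : HasDerivAt (fun s : ℝ => ((φ s 0 : ℂ) + (φ s 1 : ℂ) * Complex.I))
      ((d 0 : ℂ) + (d 1 : ℂ) * Complex.I) t :=
    (h0.ofReal_comp).add (h1.ofReal_comp.mul_const _)
  convert this using 2 <;> simp [toC, Complex.ext_iff]

lemma hasDerivAt_ofC {e : ℝ → ℂ} {d : ℂ} {t : ℝ} (h : HasDerivAt e d t) :
    HasDerivAt (fun s => (![(e s).re, (e s).im] : Fin 2 → ℝ)) ![d.re, d.im] t := by
  rw [hasDerivAt_pi]
  intro i
  fin_cases i
  · simpa [Function.comp_def] using (Complex.reCLM.hasFDerivAt.comp_hasDerivAt t h)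
  · simpa [Function.comp_def] using (Complex.imCLM.hasFDerivAt.comp_hasDerivAt t h)


lemma split_Ioi (g : ℝ → ℂ) (hint : ∀ t : ℝ, IntegrableOn g (Ioi t)) (a b : ℝ) :
    (∫ s in Ioi a, g s) = (∫ s in a..b, g s) + ∫ s in Ioi b, g s := by
  rcases le_total a b with hab | hab
  · rw [intervalIntegral.integral_of_le hab,
      ← setIntegral_union (Ioc_disjoint_Ioi le_rfl) measurableSet_Ioi
        ((hint a).mono_set Ioc_subset_Ioi_self) (hint b),
      Ioc_union_Ioi_eq_Ioi hab]
  · rw [intervalIntegral.integral_symm, intervalIntegral.integral_of_le hab]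
    have h2 := setIntegral_union (Ioc_disjoint_Ioi (le_refl a)) measurableSet_Ioi
      ((hint b).mono_set Ioc_subset_Ioi_self) (hint a)
    rw [Ioc_union_Ioi_eq_Ioi hab] at h2
    rw [h2]; ring

lemma exp_int {a : ℝ} (ha : 0 < a) (ε t : ℝ) :
    ∫ s in Ioi t, ε * Real.exp (-(a*s)) = ε / a * Real.exp (-(a*t)) := by
  have hd : ∀ x ∈ Ici t, HasDerivAt (fun s => -(ε/a) * Real.exp (-(a*s)))
      (ε * Real.exp (-(a*x))) x := by
    intro x _
    have h1 : HasDerivAt (fun s : ℝ => -(a*s)) (-a) x := by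
      exact ((hasDerivAt_id' x).const_mul a).neg.congr_deriv (by ring)
    have h2 := (Real.hasDerivAt_exp (-(a*x))).comp x h1
    have h3 := h2.const_mul (-(ε/a))
    refine h3.congr_deriv ?_
    field_simp
  have hint : IntegrableOn (fun s => ε * Real.exp (-(a*s))) (Ioi t) := by
    have := (exp_neg_integrableOn_Ioi t ha).const_mul ε
    rw [IntegrableOn]; simpa [neg_mul] using this
  have htend : Tendsto (fun s => -(ε/a) * Real.exp (-(a*s))) atTop (nhds 0) := by
    have h1 : Tendsto (fun s : ℝ => a * s) atTop atTop :=
      Tendsto.const_mul_atTop ha tendsto_id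
    have h2 : Tendsto (fun s : ℝ => -(a*s)) atTop atBot := tendsto_neg_atTop_atBot.comp h1
    have h3 := Real.tendsto_exp_atBot.comp h2
    simpa using h3.const_mul (-(ε/a))
  have := integral_Ioi_of_hasDerivAt_of_tendsto' hd hint htend
  rw [this]; ring

lemma complex_key (lam : ℂ) (ha : 0 < lam.re) {ε : ℝ} (f : ℝ → ℂ)
    (hf : Continuous f) (hb : ∀ t, ‖f t‖ ≤ ε) :
    ∃ e : ℝ → ℂ, (∀ t, HasDerivAt e (lam * e t + f t) t) ∧ ∀ t, ‖e t‖ ≤ ε / lam.re := by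
  set a := lam.re with ha'
  set g : ℝ → ℂ := fun s => Complex.exp (-(lam * s)) * f s with hg'
  have hgc : Continuous g := by
    exact (Complex.continuous_exp.comp (by continuity)).mul hf
  have hgnorm : ∀ s : ℝ, ‖g s‖ ≤ ε * Real.exp (-(a*s)) := by
    intro s
    have : ‖g s‖ = Real.exp (-(a*s)) * ‖f s‖ := by
      rw [hg', norm_mul, Complex.norm_exp]
      simp [Complex.mul_re, ha']
    rw [this]
    have hfs := hb s
    have : Real.exp (-(a*s)) * ‖f s‖ ≤ Real.exp (-(a*s)) * ε :=
      mul_le_mul_of_nonneg_left hfs (Real.exp_nonneg _)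
    linarith
  have hgint : ∀ t : ℝ, IntegrableOn g (Ioi t) := by
    intro t
    apply Integrable.mono' (g := fun s => ε * Real.exp (-(a*s)))
    · have := (exp_neg_integrableOn_Ioi t ha).const_mul ε
      simpa [neg_mul] using this
    · exact hgc.aestronglyMeasurable.restrict
    · exact ae_of_all _ hgnorm
  set G : ℝ → ℂ := fun t => ∫ s in Ioi t, g s with hG'
  have hGderiv : ∀ t : ℝ, HasDerivAt G (-(g t)) t := by
    intro t
    have heq : G = fun u => G 0 - ∫ s in (0:ℝ)..u, g s := by
      funext u
      have := split_Ioi g hgint 0 u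
      rw [hG']; simp only; rw [this]; ring
    rw [heq]
    have hFTC : HasDerivAt (fun u => ∫ s in (0:ℝ)..u, g s) (g t) t :=
      intervalIntegral.integral_hasDerivAt_right (hgc.intervalIntegrable _ _)
        (hgc.stronglyMeasurable.stronglyMeasurableAtFilter) hgc.continuousAt
    exact ((hasDerivAt_const t (G 0)).sub hFTC).congr_deriv (zero_sub _)
  refine ⟨fun t => -(Complex.exp (lam * t) * G t), ?_, ?_⟩
  · intro t
    have hexp : HasDerivAt (fun t : ℝ => Complex.exp (lam * t)) (lam * Complex.exp (lam * t)) t := by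
      have h1 : HasDerivAt (fun z : ℂ => Complex.exp (lam * z)) (lam * Complex.exp (lam * t)) (t : ℂ) := by
        simpa [mul_comm, Function.comp_def] using ((Complex.hasDerivAt_exp (lam * t)).comp (t:ℂ)
          ((hasDerivAt_id (t:ℂ)).const_mul lam))
      exact h1.comp_ofReal
    have := (hexp.mul (hGderiv t)).neg
    refine this.congr_deriv ?_
    have hne : Complex.exp (lam * t) * Complex.exp (-(lam * t)) = 1 := by
      rw [← Complex.exp_add]; simp
    simp only [hg']
    linear_combination (f t) * hne
  · intro t
    have hGnorm : ‖G t‖ ≤ ε / a * Real.exp (-(a*t)) := by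
      have h1 : ‖G t‖ ≤ ∫ s in Ioi t, ε * Real.exp (-(a*s)) := by
        apply norm_integral_le_of_norm_le
        · have := (exp_neg_integrableOn_Ioi t ha).const_mul ε
          simpa [neg_mul] using this
        · exact ae_of_all _ hgnorm
      rw [exp_int ha ε t] at h1
      exact h1
    have : ‖-(Complex.exp (lam * t) * G t)‖ = Real.exp (a*t) * ‖G t‖ := by
      rw [norm_neg, norm_mul, Complex.norm_exp]
      simp [Complex.mul_re, ha']
    rw [this]
    calc Real.exp (a*t) * ‖G t‖ ≤ Real.exp (a*t) * (ε / a * Real.exp (-(a*t))) :=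
          mul_le_mul_of_nonneg_left hGnorm (Real.exp_nonneg _)
      _ = ε / a * (Real.exp (a*t) * Real.exp (-(a*t))) := by ring
      _ = ε / a := by rw [← Real.exp_add]; simp

lemma main_upper (al be : ℝ) (hal : 0 < al) :
    UlamStable2R Set.univ (fun _ => !![al, be; -be, al]) (1 / al) := by
  refine ⟨by positivity, ?_⟩
  intro ε hε φ φd hderiv hcont hpert
  set lam : ℂ := ⟨al, -be⟩ with hlam
  have hd : ∀ t, HasDerivAt φ (φd t) t := fun t =>
    hasDerivWithinAt_univ.mp (hderiv t (mem_univ t))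
  set f : ℝ → ℂ := fun t => toC (φd t) - lam * toC (φ t) with hf'
  have hφc : Continuous φ := continuous_iff_continuousAt.mpr fun t => (hd t).continuousAt
  have hφdc : Continuous φd := continuousOn_univ.mp hcont
  have htoCc : Continuous toC := by
    have : toC = fun v => ((v 0 : ℂ) + (v 1 : ℂ) * Complex.I) := by
      funext v; simp [toC, Complex.ext_iff]
    rw [this]
    exact ((Complex.continuous_ofReal.comp (continuous_apply 0)).add
      ((Complex.continuous_ofReal.comp (continuous_apply 1)).mul continuous_const))
  have hfc : Continuous f :=
    (htoCc.comp hφdc).sub (continuous_const.mul (htoCc.comp hφc))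
  have hfb : ∀ t, ‖f t‖ ≤ ε := by
    intro t
    have : f t = toC (φd t - (!![al, be; -be, al]).mulVec (φ t)) := by
      rw [toC_sub, toC_mulVec]
    rw [this, norm_toC]
    exact hpert t (mem_univ t)
  obtain ⟨e, hde, hbnd⟩ := complex_key lam (by simpa [hlam] using hal) f hfc hfb
  refine ⟨fun t => φ t - ![(e t).re, (e t).im], ?_, ?_⟩
  · intro t _
    rw [hasDerivWithinAt_univ]
    have hx := (hd t).sub (hasDerivAt_ofC (hde t))
    have hveq : (!![al, be; -be, al]).mulVec (φ t - ![(e t).re, (e t).im])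
        = φd t - ![(lam * e t + f t).re, (lam * e t + f t).im] := by
      apply toC_inj
      rw [toC_mulVec, toC_sub, toC_sub, toC_reim, toC_reim, ← hlam]
      simp only [hf']
      ring
    rw [hveq]
    exact hx
  · intro t _
    have : φ t - (φ t - ![(e t).re, (e t).im]) = ![(e t).re, (e t).im] := by
      funext i; fin_cases i <;> simp [Matrix.vecHead, Matrix.vecTail]
    rw [this, ← norm_toC, toC_reim]
    calc ‖e t‖ ≤ ε / lam.re := hbnd t
      _ = 1 / al * ε := by rw [hlam]; field_simp

lemma main_lower (al be : ℝ) (hal : 0 < al) (K : ℝ)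
    (hK : UlamStable2R Set.univ (fun _ => !![al, be; -be, al]) K) : 1 / al ≤ K := by
  obtain ⟨hKpos, hst⟩ := hK
  set lam : ℂ := ⟨al, -be⟩ with hlam
  set mu : ℂ := ⟨0, -be⟩ with hmu
  set ζ : ℝ → ℂ := fun t => (-(1:ℂ)/al) * Complex.exp (mu * t) with hζ
  have hζd : ∀ t : ℝ, HasDerivAt ζ (mu * ζ t) t := by
    intro t
    have h1 : HasDerivAt (fun z : ℂ => Complex.exp (mu * z)) (mu * Complex.exp (mu * t)) (t : ℂ) := by
      have h2 := (Complex.hasDerivAt_exp (mu * (t:ℂ))).comp (t : ℂ)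
        ((hasDerivAt_id (t : ℂ)).const_mul mu)
      simp only [Function.comp_def] at h2
      refine h2.congr_deriv ?_
      ring
    have h2 := (h1.comp_ofReal).const_mul (-(1:ℂ)/al)
    refine h2.congr_deriv ?_
    rw [hζ]; ring
  set φ : ℝ → Fin 2 → ℝ := fun t => ![(ζ t).re, (ζ t).im] with hφ
  set φd : ℝ → Fin 2 → ℝ := fun t => ![(mu * ζ t).re, (mu * ζ t).im] with hφd
  have hζc : Continuous ζ :=
    continuous_iff_continuousAt.mpr fun t => (hζd t).continuousAt
  have hnζ : ∀ t : ℝ, ‖ζ t‖ = 1 / al := by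
    intro t
    rw [hζ]; simp only
    rw [norm_mul, Complex.norm_exp]
    have : (mu * (t:ℂ)).re = 0 := by simp [hmu, Complex.mul_re]
    rw [this]
    simp [abs_of_pos hal]
  have hyp1 : ∀ t ∈ (univ : Set ℝ), HasDerivWithinAt φ (φd t) univ t := by
    intro t _
    rw [hasDerivWithinAt_univ, hφ, hφd]
    exact hasDerivAt_ofC (hζd t)
  have hyp2 : ContinuousOn φd univ := by
    apply continuousOn_univ.mpr
    rw [hφd]
    apply continuous_pi
    intro i
    fin_cases i
    · refine (Complex.continuous_re.comp (?_ : Continuous fun a : ℝ => mu * ζ a)).congr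
        fun a => by simp
      exact continuous_const.mul hζc
    · refine (Complex.continuous_im.comp (?_ : Continuous fun a : ℝ => mu * ζ a)).congr
        fun a => by simp
      exact continuous_const.mul hζc
  have hyp3 : ∀ t ∈ (univ : Set ℝ),
      enorm2 (φd t - ((fun _ : ℝ => !![al, be; -be, al]) t).mulVec (φ t)) ≤ 1 := by
    intro t _
    have heq : toC (φd t - (!![al, be; -be, al]).mulVec (φ t)) = (mu - lam) * ζ t := by
      rw [toC_sub, toC_mulVec, ← hlam, hφ, hφd]
      simp only [toC_reim]
      ring
    rw [← norm_toC, heq]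
    have hml : mu - lam = Complex.mk (-al) 0 := by
      rw [hmu, hlam]; simp [Complex.ext_iff]
    rw [hml, norm_mul, hnζ t]
    have hna : ‖Complex.mk (-al) 0‖ = al := by
      rw [Complex.norm_def, Complex.normSq_apply]
      simp only [Complex.neg_re]
      rw [show -al * -al + 0 * 0 = al * al by ring]
      exact Real.sqrt_mul_self (le_of_lt hal)
    rw [hna, mul_one_div, div_self (ne_of_gt hal)]
  obtain ⟨x, hx, hbd⟩ := hst 1 one_pos φ φd hyp1 hyp2 hyp3
  have hwd : ∀ t : ℝ, HasDerivAt (fun s => toC (x s)) (lam * toC (x t)) t := by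
    intro t
    have := hasDerivAt_toC (hasDerivWithinAt_univ.mp (hx t (mem_univ t)))
    rwa [toC_mulVec] at this
  set w : ℝ → ℂ := fun t => toC (x t) with hw'
  have hy : ∀ t : ℝ, HasDerivAt (fun s : ℝ => Complex.exp (-(lam * s)) * w s) (0 : ℂ) t := by
    intro t
    have h1 : HasDerivAt (fun z : ℂ => Complex.exp (-(lam * z)))
        (-lam * Complex.exp (-(lam * t))) (t : ℂ) := by
      have h2 := (Complex.hasDerivAt_exp (-(lam * (t:ℂ)))).comp (t : ℂ)
        (((hasDerivAt_id (t : ℂ)).const_mul lam).neg)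
      simp only [Function.comp_def] at h2
      refine h2.congr_deriv ?_
      ring
    have h2 := (h1.comp_ofReal).mul (hwd t)
    refine h2.congr_deriv ?_
    ring
  have hconst : ∀ t : ℝ, Complex.exp (-(lam * t)) * w t = w 0 := by
    intro t
    have hdiff : Differentiable ℝ (fun s : ℝ => Complex.exp (-(lam * s)) * w s) :=
      fun s => (hy s).differentiableAt
    have := is_const_of_deriv_eq_zero hdiff (fun s => (hy s).deriv) t 0
    simpa using this
  have hwt : ∀ t : ℝ, w t = Complex.exp (lam * t) * w 0 := by
    intro t
    have hc := hconst t
    rw [← hc, ← mul_assoc, ← Complex.exp_add]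
    simp
  have hcb : ∀ t : ℝ, ‖ζ t - w t‖ ≤ K := by
    intro t
    have hb := hbd t (mem_univ t)
    rw [← norm_toC, toC_sub] at hb
    have hφζ : toC (φ t) = ζ t := toC_reim _
    rw [hφζ] at hb
    simpa using hb
  have hw0 : w 0 = 0 := by
    by_contra h0
    set t₀ : ℝ := Real.log ((K + 1/al + 1) / ‖w 0‖) / al with ht₀
    have hpos : (0:ℝ) < (K + 1/al + 1) / ‖w 0‖ := by
      apply div_pos
      · have : 0 < 1/al := by positivity
        linarith
      · exact norm_pos_iff.mpr h0
    have hexp : Real.exp (al * t₀) = (K + 1/al + 1) / ‖w 0‖ := by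
      rw [ht₀, mul_div_cancel₀ _ (ne_of_gt hal)]
      exact Real.exp_log hpos
    have hnw : ‖w t₀‖ = Real.exp (al * t₀) * ‖w 0‖ := by
      rw [hwt t₀, norm_mul, Complex.norm_exp]
      congr 2
      simp [hlam, Complex.mul_re]
    have h1 : ‖w t₀‖ = K + 1/al + 1 := by
      rw [hnw, hexp, div_mul_cancel₀ _ (ne_of_gt (norm_pos_iff.mpr h0))]
    have h2 : ‖w t₀‖ ≤ ‖ζ t₀ - w t₀‖ + ‖ζ t₀‖ := by
      have h5 := norm_sub_le (ζ t₀) (ζ t₀ - w t₀)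
      have h4 : ζ t₀ - (ζ t₀ - w t₀) = w t₀ := by ring
      rw [h4] at h5
      linarith
    rw [h1, hnζ t₀] at h2
    have := hcb t₀
    linarith
  have hfin := hcb 0
  rw [hw0, sub_zero, hnζ 0] at hfin
  exact hfin

lemma enorm2_neg (v : Fin 2 → ℝ) : enorm2 (-v) = enorm2 v := by
  simp [enorm2]

lemma reflect (M : Matrix (Fin 2) (Fin 2) ℝ) (K : ℝ)
    (h : UlamStable2R Set.univ (fun _ => M) K) :
    UlamStable2R Set.univ (fun _ => -M) K := by
  obtain ⟨hKpos, hst⟩ := h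
  refine ⟨hKpos, ?_⟩
  intro ε hε φ φd hd hc hp
  set ψ : ℝ → Fin 2 → ℝ := fun t => φ (-t) with hψ
  set ψd : ℝ → Fin 2 → ℝ := fun t => -φd (-t) with hψd
  have hdψ : ∀ t ∈ (univ : Set ℝ), HasDerivWithinAt ψ (ψd t) univ t := by
    intro t _
    rw [hasDerivWithinAt_univ]
    have h1 : HasDerivAt φ (φd (-t)) (-t) := hasDerivWithinAt_univ.mp (hd (-t) (mem_univ _))
    have hneg : HasDerivAt (fun s : ℝ => -s) (-1) t := (hasDerivAt_id t).neg
    have := h1.scomp t hneg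
    simpa [hψ, hψd, Function.comp_def] using this
  have hcψ : ContinuousOn ψd univ := by
    apply continuousOn_univ.mpr
    rw [hψd]
    exact ((continuousOn_univ.mp hc).comp continuous_neg).neg
  have hpψ : ∀ t ∈ (univ : Set ℝ),
      enorm2 (ψd t - ((fun _ : ℝ => M) t).mulVec (ψ t)) ≤ ε := by
    intro t _
    have heq : ψd t - M.mulVec (ψ t) = -(φd (-t) - (-M).mulVec (φ (-t))) := by
      rw [hψd, hψ]
      simp only [Matrix.neg_mulVec]
      funext i
      simp only [Pi.sub_apply, Pi.neg_apply]
      ring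
    rw [heq, enorm2_neg]
    exact hp (-t) (mem_univ _)
  obtain ⟨x, hx, hb⟩ := hst ε hε ψ ψd hdψ hcψ hpψ
  refine ⟨fun t => x (-t), ?_, ?_⟩
  · intro t _
    rw [hasDerivWithinAt_univ]
    have h1 : HasDerivAt x (M.mulVec (x (-t))) (-t) :=
      hasDerivWithinAt_univ.mp (hx (-t) (mem_univ _))
    have hneg : HasDerivAt (fun s : ℝ => -s) (-1) t := (hasDerivAt_id t).neg
    have h2 := h1.scomp t hneg
    have h3 : (-1 : ℝ) • M.mulVec (x (-t)) = (-M).mulVec (x (-t)) := by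
      rw [Matrix.neg_mulVec]
      funext i
      simp
    rw [h3] at h2
    exact h2
  · intro t _
    have := hb (-t) (mem_univ _)
    simpa [hψ] using this

lemma matrix_neg_eq (al be : ℝ) :
    (!![-al, -be; -(-be), -al]) = -(!![al, be; -be, al]) := by
  ext i j
  fin_cases i <;> fin_cases j <;> simp

theorem statement18 (al be : ℝ) (h : al ≠ 0) :
    UlamStable2R Set.univ (fun _ => !![al, be; -be, al]) (1 / |al|) ∧
    ∀ K : ℝ, UlamStable2R Set.univ (fun _ => !![al, be; -be, al]) K →
      1 / |al| ≤ K := by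
  rcases h.lt_or_gt with hneg | hpos
  · have hpos' : 0 < -al := by linarith
    have habs : |al| = -al := abs_of_neg hneg
    have h1 := main_upper (-al) (-be) hpos'
    simp only [matrix_neg_eq al be] at h1
    have h2 := reflect _ _ h1
    simp only [neg_neg] at h2
    constructor
    · rw [habs]; exact h2
    · intro K hK
      have h3 := reflect _ K hK
      simp only [← matrix_neg_eq al be] at h3
      have h4 := main_lower (-al) (-be) hpos' K h3
      rw [habs]; exact h4
  · have habs : |al| = al := abs_of_pos hpos
    constructor
    · rw [habs]; exact main_upper al be hpos
    · intro K hK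
      rw [habs]; exact main_lower al be hpos K hK
end
end
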